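/- arXiv:2511.09115 — 8 statements merged into one kernel-verified Lean document; each statement's English description precedes it below -/
import Mathlib

section
/- Let E be a regular (T₃) topological space and f : [0,1] → E a function that is right-continuous at every t ∈ [0,1) and has a left limit f(t−) at every t ∈ (0,1]. Then the extension of f to the split interval Î defined by sending t+ to f(t) and t− to f(t−) is continuous on Î. -/
open Set Filter Topology

/-- Points of the split interval: pairs (t, b) with lexicographic order,
where `b = false` represents `t−` and `b = true` represents `t+`. -/
abbrev SIP := ℝ ×ₗ Bool

/-- The split interval Î = {t− : t ∈ (0,1]} ∪ {t+ : t ∈ [0,1]}. -/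
def SI : Type := {p : SIP // (ofLex p).1 ∈ Set.Icc (0:ℝ) 1 ∧ ((ofLex p).1 = 0 → (ofLex p).2 = true)}

noncomputable instance : LinearOrder SI := Subtype.instLinearOrder _
noncomputable instance : TopologicalSpace SI := Preorder.topology SI
instance : OrderTopology SI := ⟨rfl⟩

/-- The point `t+` of the split interval, for `t ∈ [0,1]`. -/
def siPlus (t : ℝ) (ht : t ∈ Set.Icc (0:ℝ) 1) : SI :=
  ⟨toLex (t, true), ht, fun _ => rfl⟩

/-- The point `t−` of the split interval, for `t ∈ (0,1]`. -/
def siMinus (t : ℝ) (ht : t ∈ Set.Ioc (0:ℝ) 1) : SI :=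
  ⟨toLex (t, false), ⟨ht.1.le, ht.2⟩, fun h => absurd h ht.1.ne'⟩

lemma SI.le_iff (u v : SI) : u ≤ v ↔ ((ofLex u.1).1 < (ofLex v.1).1 ∨
    ((ofLex u.1).1 = (ofLex v.1).1 ∧ (ofLex u.1).2 ≤ (ofLex v.1).2)) :=
  Prod.Lex.le_iff

lemma SI.lt_iff (u v : SI) : u < v ↔ ((ofLex u.1).1 < (ofLex v.1).1 ∨
    ((ofLex u.1).1 = (ofLex v.1).1 ∧ (ofLex u.1).2 < (ofLex v.1).2)) :=
  Prod.Lex.lt_iff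

lemma SI.ext' {u v : SI} (h1 : (ofLex u.1).1 = (ofLex v.1).1)
    (h2 : (ofLex u.1).2 = (ofLex v.1).2) : u = v :=
  Subtype.ext (congrArg toLex (Prod.ext h1 h2))

/-- `Ici (t+)` is a neighborhood of `t+`. -/
lemma Ici_siPlus_mem_nhds (t : ℝ) (ht : t ∈ Set.Icc (0:ℝ) 1) :
    Set.Ici (siPlus t ht) ∈ 𝓝 (siPlus t ht) := by
  rcases eq_or_lt_of_le ht.1 with h0 | h0
  · have : Set.Ici (siPlus t ht) = Set.univ := by
      ext u
      simp only [Set.mem_Ici, Set.mem_univ, iff_true, SI.le_iff]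
      simp only [siPlus, ofLex_toLex]
      rcases lt_or_eq_of_le (show t ≤ (ofLex u.1).1 from h0 ▸ u.2.1.1) with h | h
      · left; exact h
      · right
        refine ⟨h, ?_⟩
        have := u.2.2 (by rw [← h, ← h0])
        simp [this]
    rw [this]
    exact Filter.univ_mem
  · have hm : t ∈ Set.Ioc (0:ℝ) 1 := ⟨h0, ht.2⟩
    have heq : Set.Ici (siPlus t ht) = Set.Ioi (siMinus t hm) := by
      ext u
      simp only [Set.mem_Ici, Set.mem_Ioi, SI.le_iff, SI.lt_iff]
      simp only [siPlus, siMinus, ofLex_toLex]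
      constructor
      · rintro (h | ⟨h1, h2⟩)
        · exact Or.inl h
        · have hc : (ofLex u.1).2 = true := le_antisymm (Bool.le_true _) h2
          exact Or.inr ⟨h1, by rw [Bool.lt_iff]; exact ⟨rfl, hc⟩⟩
      · rintro (h | ⟨h1, h2⟩)
        · exact Or.inl h
        · rw [Bool.lt_iff] at h2
          exact Or.inr ⟨h1, h2.2.ge⟩
    rw [heq]
    refine isOpen_Ioi.mem_nhds ?_
    rw [Set.mem_Ioi, SI.lt_iff]
    exact Or.inr ⟨rfl, by rw [Bool.lt_iff]; exact ⟨rfl, rfl⟩⟩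

/-- `Iic (t−)` is a neighborhood of `t−`. -/
lemma Iic_siMinus_mem_nhds (t : ℝ) (ht : t ∈ Set.Ioc (0:ℝ) 1) :
    Set.Iic (siMinus t ht) ∈ 𝓝 (siMinus t ht) := by
  have hp : t ∈ Set.Icc (0:ℝ) 1 := ⟨ht.1.le, ht.2⟩
  have heq : Set.Iic (siMinus t ht) = Set.Iio (siPlus t hp) := by
    ext u
    simp only [Set.mem_Iic, Set.mem_Iio, SI.le_iff, SI.lt_iff]
    simp only [siPlus, siMinus, ofLex_toLex]
    constructor
    · rintro (h | ⟨h1, h2⟩)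
      · exact Or.inl h
      · have hc : (ofLex u.1).2 = false := le_antisymm h2 (Bool.false_le _)
        exact Or.inr ⟨h1, by rw [Bool.lt_iff]; exact ⟨hc, rfl⟩⟩
    · rintro (h | ⟨h1, h2⟩)
      · exact Or.inl h
      · rw [Bool.lt_iff] at h2
        exact Or.inr ⟨h1, h2.1.le⟩
  rw [heq]
  refine isOpen_Iio.mem_nhds ?_
  rw [Set.mem_Iio, SI.lt_iff]
  exact Or.inr ⟨rfl, by rw [Bool.lt_iff]; exact ⟨rfl, rfl⟩⟩

/-- If `E` is regular (T₃) and `f : [0,1] → E` is right-continuous on `[0,1)` with left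
limits `g t` at every `t ∈ (0,1]`, then the extension of `f` to the split interval
sending `t+` to `f t` and `t−` to `g t` is continuous. -/
theorem splitInterval_extension_continuous {E : Type*} [TopologicalSpace E] [T3Space E]
    (f g : ℝ → E)
    (hr : ∀ t ∈ Set.Ico (0:ℝ) 1, Tendsto f (𝓝[>] t) (𝓝 (f t)))
    (hl : ∀ t ∈ Set.Ioc (0:ℝ) 1, Tendsto f (𝓝[<] t) (𝓝 (g t))) :
    Continuous (fun v : SI =>
      if (ofLex v.1).2 = true then f (ofLex v.1).1 else g (ofLex v.1).1) := by
  set F : SI → E := fun v =>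
    if (ofLex v.1).2 = true then f (ofLex v.1).1 else g (ofLex v.1).1 with hF
  rw [continuous_iff_continuousAt]
  rintro ⟨p, hp⟩
  set t : ℝ := (ofLex p).1 with htdef
  rcases (Bool.eq_false_or_eq_true (ofLex p).2).symm with hb | hb
  · -- the point is t−, with t ∈ (0,1]
    have ht0 : 0 < t := by
      rcases lt_or_eq_of_le hp.1.1 with h | h
      · exact h
      · exact absurd (hp.2 h.symm) (by rw [hb]; simp)
    have htm : t ∈ Set.Ioc (0:ℝ) 1 := ⟨ht0, hp.1.2⟩
    have hveq : (⟨p, hp⟩ : SI) = siMinus t htm := SI.ext' rfl (by simpa [siMinus] using hb)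
    rw [hveq]
    have hFv : F (siMinus t htm) = g t := by simp [hF, siMinus]
    unfold ContinuousAt
    rw [hFv]
    have hn : 𝓝 (siMinus t htm) = 𝓝[≤] (siMinus t htm) :=
      (nhdsWithin_eq_nhds.2 (Iic_siMinus_mem_nhds t htm)).symm
    rw [hn, (closed_nhds_basis (g t)).tendsto_right_iff]
    rintro C ⟨hCn, hCc⟩
    obtain ⟨r, hrt, hrC⟩ := (nhdsLT_basis t).eventually_iff.1
      ((hl t htm).eventually_mem hCn)
    have key : ∀ x ∈ Set.Ioo r t, f x ∈ C := fun x hx => hrC hx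
    set r' : ℝ := max r 0 with hr'def
    have hr't : r' < t := max_lt hrt ht0
    have hr'm : r' ∈ Set.Icc (0:ℝ) 1 := ⟨le_max_right _ _, le_trans hr't.le hp.1.2⟩
    have hbb : siPlus r' hr'm < siMinus t htm := by
      rw [SI.lt_iff]; exact Or.inl hr't
    rw [(nhdsLE_basis_of_exists_lt ⟨_, hbb⟩).eventually_iff]
    refine ⟨siPlus r' hr'm, hbb, ?_⟩
    rintro ⟨q, hq⟩ ⟨hq1, hq2⟩
    set s : ℝ := (ofLex q).1 with hsdef
    replace hq1 := (SI.lt_iff _ _).1 hq1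
    replace hq2 := (SI.le_iff _ _).1 hq2
    simp only [siPlus, siMinus, ofLex_toLex] at hq1 hq2
    have hrs : r' < s := by
      rcases hq1 with h | ⟨_, h⟩
      · exact h
      · rw [Bool.lt_iff] at h; exact absurd h.1 (by simp)
    have hrs' : r < s := lt_of_le_of_lt (le_max_left r 0) hrs
    rcases hq2 with h | ⟨h1, h2⟩
    · -- s < t
      rcases (Bool.eq_false_or_eq_true (ofLex q).2).symm with hc | hc
      · -- interior left-limit point s−
        have hsm : s ∈ Set.Ioc (0:ℝ) 1 :=
          ⟨lt_of_le_of_lt (le_max_right r 0) hrs, le_trans h.le hp.1.2⟩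
        have hFq : F ⟨q, hq⟩ = g s := by simp [hF, ← hsdef, hc]
        rw [hFq]
        refine hCc.mem_of_tendsto (hl s hsm) ?_
        filter_upwards [Ioo_mem_nhdsLT hrs'] with x hx
        exact key x ⟨hx.1, hx.2.trans h⟩
      · have hFq : F ⟨q, hq⟩ = f s := by simp [hF, ← hsdef, hc]
        rw [hFq]
        exact key s ⟨hrs', h⟩
    · -- s = t and second coord ≤ false, so the point is t− itself
      have hc : (ofLex q).2 = false := le_antisymm h2 (Bool.false_le _)
      have hFq : F ⟨q, hq⟩ = g s := by simp [hF, ← hsdef, hc]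
      rw [hFq, hsdef, h1]
      exact mem_of_mem_nhds hCn
  · -- the point is t+, with t ∈ [0,1]
    have hveq : (⟨p, hp⟩ : SI) = siPlus t hp.1 := SI.ext' rfl (by simpa [siPlus] using hb)
    rw [hveq]
    have hFv : F (siPlus t hp.1) = f t := by simp [hF, siPlus]
    unfold ContinuousAt
    rw [hFv]
    have hn : 𝓝 (siPlus t hp.1) = 𝓝[≥] (siPlus t hp.1) :=
      (nhdsWithin_eq_nhds.2 (Ici_siPlus_mem_nhds t hp.1)).symm
    rw [hn, (closed_nhds_basis (f t)).tendsto_right_iff]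
    rintro C ⟨hCn, hCc⟩
    rcases eq_or_lt_of_le hp.1.2 with ht1 | ht1
    · -- t = 1 : the point t+ is the maximum, Ici is a singleton
      refine Filter.eventually_of_mem self_mem_nhdsWithin ?_
      rintro ⟨q, hq⟩ hq1
      replace hq1 := (SI.le_iff _ _).1 hq1
      simp only [siPlus, ofLex_toLex] at hq1
      have hs1 : (ofLex q).1 = t := by
        rcases hq1 with h | ⟨h, _⟩
        · exact absurd (ht1 ▸ h) (not_lt.2 hq.1.2)
        · exact h.symm
      have hc : (ofLex q).2 = true := by
        rcases hq1 with h | ⟨_, h⟩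
        · exact absurd (ht1 ▸ h) (not_lt.2 hq.1.2)
        · exact le_antisymm (Bool.le_true _) h
      have hFq : F ⟨q, hq⟩ = f t := by simp [hF, hc, hs1]
      rw [hFq]
      exact mem_of_mem_nhds hCn
    · -- t < 1
      obtain ⟨r, hrt, hrC⟩ := (nhdsGT_basis t).eventually_iff.1
        ((hr t ⟨hp.1.1, ht1⟩).eventually_mem hCn)
      have key : ∀ x ∈ Set.Ioo t r, f x ∈ C := fun x hx => hrC hx
      set r' : ℝ := min r 1 with hr'def
      have hr't : t < r' := lt_min hrt ht1
      have hr'm : r' ∈ Set.Ioc (0:ℝ) 1 := ⟨lt_of_le_of_lt hp.1.1 hr't, min_le_right _ _⟩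
      have hbb : siPlus t hp.1 < siMinus r' hr'm := by
        rw [SI.lt_iff]; exact Or.inl hr't
      rw [(nhdsGE_basis_of_exists_gt ⟨_, hbb⟩).eventually_iff]
      refine ⟨siMinus r' hr'm, hbb, ?_⟩
      rintro ⟨q, hq⟩ ⟨hq1, hq2⟩
      set s : ℝ := (ofLex q).1 with hsdef
      replace hq1 := (SI.le_iff _ _).1 hq1
      replace hq2 := (SI.lt_iff _ _).1 hq2
      simp only [siPlus, siMinus, ofLex_toLex] at hq1 hq2
      have hsr : s < r' := by
        rcases hq2 with h | ⟨_, h⟩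
        · exact h
        · rw [Bool.lt_iff] at h; exact absurd h.2 (by simp)
      have hsr' : s < r := lt_of_lt_of_le hsr (min_le_left _ _)
      rcases hq1 with h | ⟨h1, h2⟩
      · -- t < s
        rcases (Bool.eq_false_or_eq_true (ofLex q).2).symm with hc | hc
        · -- interior left-limit point s−
          have hsm : s ∈ Set.Ioc 0 1 := ⟨lt_of_le_of_lt hp.1.1 h, le_trans hsr.le hr'm.2⟩
          have hFq : F ⟨q, hq⟩ = g s := by simp [hF, ← hsdef, hc]
          rw [hFq]
          refine hCc.mem_of_tendsto (hl s hsm) ?_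
          filter_upwards [Ioo_mem_nhdsLT h] with x hx
          exact key x ⟨hx.1, hx.2.trans hsr'⟩
        · have hFq : F ⟨q, hq⟩ = f s := by simp [hF, ← hsdef, hc]
          rw [hFq]
          exact key s ⟨h, hsr'⟩
      · -- s = t, second coord ≥ true so the point is t+ itself
        have hc : (ofLex q).2 = true := le_antisymm (Bool.le_true _) h2
        have hFq : F ⟨q, hq⟩ = f s := by simp [hF, ← hsdef, hc]
        rw [hFq, hsdef, ← h1]
        exact mem_of_mem_nhds hCn
end

section
/- Let E be a regular (T₃) topological space and f : [0,1] → E a càdlàg function. Then f admits a unique continuous extension to the split interval Î, and this extension is given by f(t+) = f(t) and f(t−) = lim_{s↑t} f(s). -/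
open Set Filter Topology

set_option linter.unusedSectionVars false

namespace SIExtAux

lemma si_lt_iff {a b : ℝ} {c d : Bool} {h1 h2} :
    (⟨toLex (a, c), h1⟩ : SI) < ⟨toLex (b, d), h2⟩ ↔ a < b ∨ (a = b ∧ c = false ∧ d = true) := by
  rw [Subtype.mk_lt_mk, Prod.Lex.lt_iff]
  simp [Bool.lt_iff]

variable {E : Type*} [TopologicalSpace E] [T3Space E] (f g : ℝ → E)

/-- The candidate extension. -/
def ext (p : SI) : E :=
  if (ofLex p.1).2 = true then f (ofLex p.1).1 else g (ofLex p.1).1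

lemma ext_plus (t : ℝ) (ht : t ∈ Set.Icc (0:ℝ) 1) : ext f g (siPlus t ht) = f t := rfl

lemma ext_minus (t : ℝ) (ht : t ∈ Set.Ioc (0:ℝ) 1) : ext f g (siMinus t ht) = g t := rfl

variable (hl : ∀ t ∈ Set.Ioc (0:ℝ) 1, Tendsto f (𝓝[<] t) (𝓝 (g t)))

include hl

/-- If f lands in a closed set on a left interval, the left limit is in that set. -/
lemma g_mem {V : Set E} (hVc : IsClosed V) {l a : ℝ} (ha : a ∈ Set.Ioc (0:ℝ) 1)
    (hla : l < a) (hsub : ∀ x ∈ Set.Ioo l a, f x ∈ V) : g a ∈ V := by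
  refine hVc.mem_of_tendsto (hl a ha) ?_
  filter_upwards [Ioo_mem_nhdsLT_of_mem (show a ∈ Set.Ioc l a from ⟨hla, le_refl a⟩)] with x hx
  exact hsub x hx

variable (hr : ∀ t ∈ Set.Ico (0:ℝ) 1, Tendsto f (𝓝[>] t) (𝓝 (f t)))

include hr

lemma ext_continuous : Continuous (ext f g) := by
  rw [continuous_iff_continuousAt]
  rintro ⟨⟨t, b⟩, ht, ht0⟩
  intro U hU
  rw [mem_map]
  cases b with
  | true =>
    replace hU : U ∈ 𝓝 (f t) := hU
    rcases lt_or_eq_of_le ht.2 with ht1 | ht1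
    · -- t < 1, right-continuity case
      obtain ⟨V, hVn, hVc, hVU⟩ := exists_mem_nhds_isClosed_subset hU
      have hiV : interior V ∈ 𝓝 (f t) := interior_mem_nhds.2 hVn
      have hft : f t ∈ interior V := mem_of_mem_nhds hiV
      have hev : f ⁻¹' interior V ∈ 𝓝[>] t := (hr t ⟨ht.1, ht1⟩).eventually hiV
      obtain ⟨u, hu, huV⟩ := mem_nhdsGT_iff_exists_Ioo_subset.1 hev
      set s : ℝ := min u 1 with hs
      have hts : t < s := lt_min hu ht1
      have hs0 : 0 < s := lt_of_le_of_lt ht.1 hts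
      have hs1 : s ≤ 1 := min_le_right u 1
      -- key: any point (a,c) with t ≤ a < s, (a = t → c = true) maps into V
      have key : ∀ (a : ℝ) (c : Bool) (hq : _), t ≤ a → a < s →
          (a = t → c = true) → ext f g (⟨toLex (a, c), hq⟩ : SI) ∈ U := by
        intro a c hq hta has hac
        cases c with
        | true =>
          have : f a ∈ interior V := by
            rcases eq_or_lt_of_le hta with h | h
            · rw [← h]; exact hft
            · exact huV ⟨h, lt_of_lt_of_le has (min_le_left u 1)⟩
          exact hVU (interior_subset this)
        | false =>
          have hta' : t < a := lt_of_le_of_ne hta (fun h => Bool.noConfusion (hac h.symm))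
          have haV : g a ∈ V := by
            refine g_mem f g hl hVc ⟨lt_of_le_of_lt ht.1 hta', le_trans has.le hs1⟩ hta' ?_
            intro x hx
            exact interior_subset (huV ⟨hx.1, lt_trans hx.2 (lt_of_lt_of_le has (min_le_left u 1))⟩)
          exact hVU haV
      rcases eq_or_lt_of_le ht.1 with ht0' | ht0'
      · -- t = 0 : use Iio (s−)
        have hN : Iio (siMinus s ⟨hs0, hs1⟩) ∈ 𝓝 (siPlus t ht) :=
          Iio_mem_nhds (si_lt_iff.2 (Or.inl hts))
        refine mem_of_superset hN ?_
        rintro ⟨⟨a, c⟩, hq⟩ hlt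
        rcases si_lt_iff.1 hlt with h | h
        · exact key a c hq (le_trans ht0'.ge hq.1.1) h (fun h' => hq.2 (h'.trans ht0'.symm))
        · exact absurd h.2.2 (by simp)
      · -- t > 0 : use Ioo (t−) (s−)
        have hN : Ioo (siMinus t ⟨ht0', ht.2⟩) (siMinus s ⟨hs0, hs1⟩) ∈
            𝓝 (siPlus t ht) :=
          Ioo_mem_nhds (si_lt_iff.2 (Or.inr ⟨rfl, rfl, rfl⟩)) (si_lt_iff.2 (Or.inl hts))
        refine mem_of_superset hN ?_
        rintro ⟨⟨a, c⟩, hq⟩ ⟨h1, h2⟩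
        have h1' : t ≤ a ∧ (a = t → c = true) := by
          rcases si_lt_iff.1 h1 with h | h
          · exact ⟨h.le, fun h' => absurd h' h.ne'⟩
          · exact ⟨h.1.le, fun _ => h.2.2⟩
        have h2' : a < s := by
          rcases si_lt_iff.1 h2 with h | h
          · exact h
          · exact absurd h.2.2 (by simp)
        exact key a c hq h1'.1 h2' h1'.2
    · -- t = 1 : {1+} is open
      have hN : Ioi (siMinus 1 ⟨one_pos, le_refl 1⟩) ∈ 𝓝 (siPlus t ht) :=
        Ioi_mem_nhds (si_lt_iff.2 (Or.inr ⟨ht1.symm, rfl, rfl⟩))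
      refine mem_of_superset hN ?_
      rintro ⟨⟨a, c⟩, hq⟩ hlt
      rcases si_lt_iff.1 hlt with h | h
      · exact absurd hq.1.2 (not_le.2 h)
      · obtain ⟨ha, -, hc⟩ := h
        subst hc
        have hat : a = t := by rw [← ha]; exact ht1.symm
        show f a ∈ U
        rw [hat]
        exact mem_of_mem_nhds hU
  | false =>
    -- point t−, with t ∈ (0,1]
    have htpos : 0 < t := lt_of_le_of_ne ht.1 (fun h => Bool.noConfusion (ht0 h.symm))
    replace hU : U ∈ 𝓝 (g t) := hU
    obtain ⟨V, hVn, hVc, hVU⟩ := exists_mem_nhds_isClosed_subset hU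
    have hiV : interior V ∈ 𝓝 (g t) := interior_mem_nhds.2 hVn
    have hev : f ⁻¹' interior V ∈ 𝓝[<] t := (hl t ⟨htpos, ht.2⟩).eventually hiV
    obtain ⟨l, hlt, hlV⟩ := mem_nhdsLT_iff_exists_Ioo_subset.1 hev
    set s : ℝ := max l 0 with hs
    have hst : s < t := max_lt hlt htpos
    have hs0 : 0 ≤ s := le_max_right l 0
    have hs1 : s ≤ 1 := le_trans hst.le ht.2
    have hsub : ∀ x ∈ Set.Ioo s t, f x ∈ interior V := fun x hx =>
      hlV ⟨lt_of_le_of_lt (le_max_left l 0) hx.1, hx.2⟩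
    refine mem_of_superset (Ioo_mem_nhds
      (a := siPlus s ⟨hs0, hs1⟩)
      (b := siPlus t ht) (x := ⟨toLex (t, false), ht, ht0⟩) ?_ ?_) ?_
    · exact si_lt_iff.2 (Or.inl hst)
    · exact si_lt_iff.2 (Or.inr ⟨rfl, rfl, rfl⟩)
    · rintro ⟨⟨a, c⟩, hq⟩ ⟨h1, h2⟩
      have h1' : s < a := by
        rcases si_lt_iff.1 h1 with h | h
        · exact h
        · exact absurd h.2.1 (by simp)
      have h2' : a < t ∨ (a = t ∧ c = false) := by
        rcases si_lt_iff.1 h2 with h | h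
        · exact Or.inl h
        · exact Or.inr ⟨h.1, h.2.1⟩
      cases c with
      | true =>
        have hat : a < t := by
          rcases h2' with h | h
          · exact h
          · exact absurd h.2 (by simp)
        show f a ∈ U
        exact hVU (interior_subset (hsub a ⟨h1', hat⟩))
      | false =>
        show g a ∈ U
        rcases h2' with h | h
        · refine hVU (g_mem f g hl hVc ⟨lt_of_le_of_lt hs0 h1', le_trans h.le ht.2⟩ h1' ?_)
          intro x hx
          exact interior_subset (hsub x ⟨hx.1, lt_trans hx.2 h⟩)
        · rw [h.1]
          exact hVU (mem_of_mem_nhds hVn)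

omit hr hl

/-- clamp map ℝ → SI via plus points -/
noncomputable def P (u : ℝ) : SI :=
  if h : u ∈ Set.Icc (0:ℝ) 1 then siPlus u h else siPlus 0 ⟨le_refl 0, zero_le_one⟩

lemma tendsto_P (t : ℝ) (ht : t ∈ Set.Ioc (0:ℝ) 1) :
    Tendsto P (𝓝[<] t) (𝓝 (siMinus t ht)) := by
  have hIoo : Set.Ioo (0:ℝ) t ∈ 𝓝[<] t :=
    Ioo_mem_nhdsLT_of_mem ⟨ht.1, le_refl t⟩
  rw [tendsto_order]
  constructor
  · rintro ⟨⟨a, c⟩, hq⟩ hlt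
    have ha : a < t := by
      rcases si_lt_iff.1 hlt with h | h
      · exact h
      · exact absurd h.2.2 (by simp)
    have hm : Set.Ioo (max a 0) t ∈ 𝓝[<] t :=
      Ioo_mem_nhdsLT_of_mem ⟨max_lt ha ht.1, le_refl t⟩
    filter_upwards [hm] with u hu
    have hu01 : u ∈ Set.Icc (0:ℝ) 1 :=
      ⟨(lt_of_le_of_lt (le_max_right a 0) hu.1).le, le_trans hu.2.le ht.2⟩
    rw [P, dif_pos hu01]
    exact si_lt_iff.2 (Or.inl (lt_of_le_of_lt (le_max_left a 0) hu.1))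
  · intro c hc
    filter_upwards [hIoo] with u hu
    have hu01 : u ∈ Set.Icc (0:ℝ) 1 := ⟨hu.1.le, le_trans hu.2.le ht.2⟩
    have : P u < siMinus t ht := by
      rw [P, dif_pos hu01]
      exact si_lt_iff.2 (Or.inl hu.2)
    exact lt_trans this hc

include hl

lemma eq_g (F : SI → E) (hF : Continuous F)
    (hFf : ∀ t (ht : t ∈ Set.Icc (0:ℝ) 1), F (siPlus t ht) = f t)
    (t : ℝ) (ht : t ∈ Set.Ioc (0:ℝ) 1) : F (siMinus t ht) = g t := by
  have h1 : Tendsto (F ∘ P) (𝓝[<] t) (𝓝 (F (siMinus t ht))) :=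
    (hF.tendsto _).comp (tendsto_P t ht)
  have h2 : Tendsto f (𝓝[<] t) (𝓝 (F (siMinus t ht))) := by
    refine h1.congr' ?_
    filter_upwards [Ioo_mem_nhdsLT_of_mem (show t ∈ Set.Ioc (0:ℝ) t from ⟨ht.1, le_refl t⟩)]
      with u hu
    have hu01 : u ∈ Set.Icc (0:ℝ) 1 := ⟨hu.1.le, le_trans hu.2.le ht.2⟩
    show F (P u) = f u
    rw [P, dif_pos hu01]
    exact hFf u hu01
  exact tendsto_nhds_unique h2 (hl t ht)

end SIExtAux

/-- If `E` is regular (T₃) and `f : [0,1] → E` is càdlàg, with left limits `g t` at each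
`t ∈ (0,1]`, then `f` admits a unique continuous extension to the split interval, and
this extension sends `t+` to `f t` and `t−` to `g t`. -/
theorem splitInterval_extension_existsUnique {E : Type*} [TopologicalSpace E] [T3Space E]
    (f g : ℝ → E)
    (hr : ∀ t ∈ Set.Ico (0:ℝ) 1, Tendsto f (𝓝[>] t) (𝓝 (f t)))
    (hl : ∀ t ∈ Set.Ioc (0:ℝ) 1, Tendsto f (𝓝[<] t) (𝓝 (g t))) :
    (∃! F : SI → E, Continuous F ∧ ∀ t (ht : t ∈ Set.Icc (0:ℝ) 1), F (siPlus t ht) = f t) ∧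
    (∀ F : SI → E,
      (Continuous F ∧ ∀ t (ht : t ∈ Set.Icc (0:ℝ) 1), F (siPlus t ht) = f t) →
      ∀ t (ht : t ∈ Set.Ioc (0:ℝ) 1), F (siMinus t ht) = g t) := by
  refine ⟨⟨SIExtAux.ext f g, ⟨SIExtAux.ext_continuous f g hl hr, fun t ht => rfl⟩, ?_⟩,
    fun F hF t ht => SIExtAux.eq_g f g hl F hF.1 hF.2 t ht⟩
  rintro F ⟨hFc, hFf⟩
  funext p
  obtain ⟨⟨a, c⟩, hq⟩ := p
  cases c with
  | true => exact (hFf a hq.1).trans rfl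
  | false =>
    have ha : a ∈ Set.Ioc (0:ℝ) 1 :=
      ⟨lt_of_le_of_ne hq.1.1 (fun h => Bool.noConfusion (hq.2 h.symm)), hq.1.2⟩
    exact SIExtAux.eq_g f g hl F hFc hFf a ha
end

section
/- Let E be a regular (T₃) topological space and f : [0,1] → E a càdlàg function. Then the set {f(t) : t ∈ [0,1]} ∪ {f(t−) : t ∈ (0,1]} is a compact subset of E, where f(t−) denotes the left limit of f at t. -/
open Set Filter Topology

/-- If `E` is regular (T₃) and `f : [0,1] → E` is càdlàg, with left limits `g t` at each
`t ∈ (0,1]`, then the set `{f t : t ∈ [0,1]} ∪ {f(t−) : t ∈ (0,1]}` is compact. -/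
theorem cadlag_range_union_leftLimits_isCompact {E : Type*} [TopologicalSpace E] [T3Space E]
    (f g : ℝ → E)
    (hr : ∀ t ∈ Set.Ico (0:ℝ) 1, Tendsto f (𝓝[>] t) (𝓝 (f t)))
    (hl : ∀ t ∈ Set.Ioc (0:ℝ) 1, Tendsto f (𝓝[<] t) (𝓝 (g t))) :
    IsCompact (f '' Set.Icc 0 1 ∪ g '' Set.Ioc 0 1) := by
  apply isCompact_of_finite_subcover
  intro ι U hUo hcov
  classical
  -- regularity: shrink an open set around a point to one with closure inside
  have reg : ∀ (a : E) (i : ι), a ∈ U i → ∃ V, IsOpen V ∧ a ∈ V ∧ closure V ⊆ U i := by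
    intro a i ha
    obtain ⟨t, ht, htc, hts⟩ := exists_mem_nhds_isClosed_subset ((hUo i).mem_nhds ha)
    exact ⟨interior t, isOpen_interior, mem_interior_iff_mem_nhds.2 ht,
      (closure_minimal interior_subset htc).trans hts⟩
  set p : Set ℝ → Prop := fun t => ∃ fs : Finset ι,
    (f '' (t ∩ Set.Icc 0 1) ∪ g '' (t ∩ Set.Ioc 0 1)) ⊆ ⋃ i ∈ fs, U i with hp
  have key : p (Set.Icc 0 1) := by
    refine isCompact_Icc.induction_on (p := p) ⟨∅, by simp⟩ ?_ ?_ ?_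
    · rintro s t hst ⟨fs, hfs⟩
      exact ⟨fs, Set.union_subset_union (Set.image_mono (Set.inter_subset_inter_left _ hst))
        (Set.image_mono (Set.inter_subset_inter_left _ hst)) |>.trans hfs⟩
    · rintro s t ⟨fs, hfs⟩ ⟨ft, hft⟩
      refine ⟨fs ∪ ft, ?_⟩
      rintro y (⟨z, ⟨hz1 | hz1, hz2⟩, rfl⟩ | ⟨z, ⟨hz1 | hz1, hz2⟩, rfl⟩)
      · rcases Set.mem_iUnion₂.1 (hfs (Or.inl ⟨z, ⟨hz1, hz2⟩, rfl⟩)) with ⟨i, hi, hy⟩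
        exact Set.mem_iUnion₂.2 ⟨i, Finset.mem_union_left _ hi, hy⟩
      · rcases Set.mem_iUnion₂.1 (hft (Or.inl ⟨z, ⟨hz1, hz2⟩, rfl⟩)) with ⟨i, hi, hy⟩
        exact Set.mem_iUnion₂.2 ⟨i, Finset.mem_union_right _ hi, hy⟩
      · rcases Set.mem_iUnion₂.1 (hfs (Or.inr ⟨z, ⟨hz1, hz2⟩, rfl⟩)) with ⟨i, hi, hy⟩
        exact Set.mem_iUnion₂.2 ⟨i, Finset.mem_union_left _ hi, hy⟩
      · rcases Set.mem_iUnion₂.1 (hft (Or.inr ⟨z, ⟨hz1, hz2⟩, rfl⟩)) with ⟨i, hi, hy⟩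
        exact Set.mem_iUnion₂.2 ⟨i, Finset.mem_union_right _ hi, hy⟩
    · intro x hx
      obtain ⟨i₀, hi₀⟩ : ∃ i, f x ∈ U i := by
        have : f x ∈ ⋃ i, U i := hcov (Or.inl ⟨x, hx, rfl⟩)
        simpa using this
      -- right side
      have hR : ∃ b, x < b ∧ (∀ s, x ≤ s → s < b → s ≤ 1 → f s ∈ U i₀) ∧
          (∀ s, x < s → s < b → s ≤ 1 → g s ∈ U i₀) := by
        rcases lt_or_ge x 1 with hx1 | hx1
        · obtain ⟨V, hVo, hfV, hVU⟩ := reg _ _ hi₀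
          have hV : ∀ᶠ s in 𝓝[>] x, f s ∈ V := hr x ⟨hx.1, hx1⟩ (hVo.mem_nhds hfV)
          obtain ⟨b', hb', hsub⟩ := mem_nhdsGT_iff_exists_Ioo_subset.1 hV
          refine ⟨b', hb', ?_, ?_⟩
          · intro s hxs hsb _
            rcases eq_or_lt_of_le hxs with rfl | h
            · exact hi₀
            · exact hVU (subset_closure (hsub ⟨h, hsb⟩))
          · intro s hxs hsb hs1
            have hgs := hl s ⟨lt_of_le_of_lt hx.1 hxs, hs1⟩
            have hmem : Set.Ioo x b' ∈ 𝓝[<] s := Ioo_mem_nhdsLT_of_mem ⟨hxs, le_of_lt hsb⟩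
            exact hVU (mem_closure_of_tendsto hgs (mem_of_superset hmem hsub))
        · have hx1' : x = 1 := le_antisymm hx.2 hx1
          refine ⟨x + 1, by linarith, ?_, ?_⟩
          · intro s hxs hsb hs1
            have : s = x := le_antisymm (hx1' ▸ hs1) hxs
            rw [this]; exact hi₀
          · intro s hxs hsb hs1
            exact absurd (hx1' ▸ hs1) (not_le.2 (hx1' ▸ hxs))
      -- left side
      have hL : ∃ a, a < x ∧ ∃ i₁ : ι, (∀ s, a < s → s < x → 0 ≤ s → f s ∈ U i₁) ∧
          (∀ s, a < s → s ≤ x → 0 < s → s ≤ 1 → g s ∈ U i₁) := by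
        rcases lt_or_ge 0 x with hx0 | hx0
        · have hgx : g x ∈ ⋃ i, U i := hcov (Or.inr ⟨x, ⟨hx0, hx.2⟩, rfl⟩)
          obtain ⟨i₁, hi₁⟩ := Set.mem_iUnion.1 hgx
          obtain ⟨W, hWo, hgW, hWU⟩ := reg _ _ hi₁
          have hW : ∀ᶠ s in 𝓝[<] x, f s ∈ W := hl x ⟨hx0, hx.2⟩ (hWo.mem_nhds hgW)
          obtain ⟨a', ha', hsub⟩ := mem_nhdsLT_iff_exists_Ioo_subset.1 hW
          refine ⟨a', ha', i₁, ?_, ?_⟩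
          · intro s h1 h2 _
            exact hWU (subset_closure (hsub ⟨h1, h2⟩))
          · intro s h1 h2 h3 h4
            rcases eq_or_lt_of_le h2 with rfl | h2'
            · exact hWU (subset_closure hgW)
            · have hgs := hl s ⟨h3, h4⟩
              have hmem : Set.Ioo a' x ∈ 𝓝[<] s := Ioo_mem_nhdsLT_of_mem ⟨h1, le_of_lt h2'⟩
              exact hWU (mem_closure_of_tendsto hgs (mem_of_superset hmem hsub))
        · refine ⟨x - 1, by linarith, i₀, ?_, ?_⟩
          · intro s h1 h2 h3; exact absurd (lt_of_lt_of_le h2 hx0) (not_lt.2 h3)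
          · intro s h1 h2 h3 h4; exact absurd (lt_of_lt_of_le h3 (h2.trans hx0)) (lt_irrefl 0)
      obtain ⟨b, hxb, hfR, hgR⟩ := hR
      obtain ⟨a, hax, i₁, hfL, hgL⟩ := hL
      refine ⟨Set.Ioo a b, mem_nhdsWithin_of_mem_nhds (Ioo_mem_nhds hax hxb), {i₀, i₁}, ?_⟩
      have hmem0 : U i₀ ⊆ ⋃ i ∈ ({i₀, i₁} : Finset ι), U i := fun y hy =>
        Set.mem_iUnion₂.2 ⟨i₀, by simp, hy⟩
      have hmem1 : U i₁ ⊆ ⋃ i ∈ ({i₀, i₁} : Finset ι), U i := fun y hy =>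
        Set.mem_iUnion₂.2 ⟨i₁, by simp, hy⟩
      rintro y (⟨s, ⟨⟨hsa, hsb⟩, hs0, hs1⟩, rfl⟩ | ⟨s, ⟨⟨hsa, hsb⟩, hs0, hs1⟩, rfl⟩)
      · rcases lt_trichotomy s x with h | h | h
        · exact hmem1 (hfL s hsa h hs0)
        · subst h; exact hmem0 hi₀
        · exact hmem0 (hfR s (le_of_lt h) hsb hs1)
      · rcases le_or_gt s x with h | h
        · exact hmem1 (hgL s hsa h hs0 hs1)
        · exact hmem0 (hgR s h hsb hs1)
  obtain ⟨fs, hfs⟩ := key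
  refine ⟨fs, ?_⟩
  have h1 : Set.Icc (0:ℝ) 1 ∩ Set.Icc 0 1 = Set.Icc 0 1 := Set.inter_self _
  have h2 : Set.Icc (0:ℝ) 1 ∩ Set.Ioc 0 1 = Set.Ioc 0 1 :=
    Set.inter_eq_self_of_subset_right Set.Ioc_subset_Icc_self
  rwa [h1, h2] at hfs
end

section
/- Let E be a regular (T₃) topological space and f : [0,1] → E a càdlàg function. Then the range f([0,1]) is relatively compact in E, i.e., its closure is compact. -/
open Set Filter Topology

/-- If `E` is regular (T₃) and `f : [0,1] → E` is càdlàg (right-continuous on `[0,1)`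
with left limits on `(0,1]`), then the range `f([0,1])` is relatively compact. -/
theorem cadlag_range_relatively_compact {E : Type*} [TopologicalSpace E] [T3Space E]
    (f : ℝ → E)
    (hr : ∀ t ∈ Set.Ico (0:ℝ) 1, Tendsto f (𝓝[>] t) (𝓝 (f t)))
    (hl : ∀ t ∈ Set.Ioc (0:ℝ) 1, ∃ L, Tendsto f (𝓝[<] t) (𝓝 L)) :
    IsCompact (closure (f '' Set.Icc 0 1)) := by
  haveI : Nonempty E := ⟨f 0⟩
  set g : ℝ → E := fun t => limUnder (𝓝[<] t) f with hgdef
  have hgl : ∀ t ∈ Set.Ioc (0:ℝ) 1, Tendsto f (𝓝[<] t) (𝓝 (g t)) := by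
    intro t ht
    obtain ⟨L, hL⟩ := hl t ht
    have : g t = L := hL.limUnder_eq
    rw [this]; exact hL
  set K : Set E := f '' Set.Icc 0 1 ∪ g '' Set.Ioc 0 1 with hKdef
  have hKsub : f '' Set.Icc 0 1 ⊆ K := Set.subset_union_left
  suffices hKc : IsCompact K by
    exact hKc.of_isClosed_subset isClosed_closure (closure_minimal hKsub hKc.isClosed)
  apply isCompact_of_finite_subcover
  intro ι U hU hcov
  -- an arbitrary index, used for junk values
  obtain ⟨i₀, hi₀⟩ : ∃ i, f 0 ∈ U i := by
    have : f 0 ∈ ⋃ i, U i := hcov (hKsub ⟨0, ⟨le_refl 0, zero_le_one⟩, rfl⟩)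
    simpa using this
  -- right structure at each point
  have rkey : ∀ t ∈ Set.Icc (0:ℝ) 1, ∃ i : ι, ∃ A : Set E, ∃ δ : ℝ, 0 < δ ∧
      closure A ⊆ U i ∧
      (∀ s ∈ Set.Icc (0:ℝ) 1, t ≤ s → s < t + δ → f s ∈ A) ∧
      (∀ s ∈ Set.Ioc (0:ℝ) 1, t < s → s < t + δ → g s ∈ closure A) := by
    intro t ht
    have hft : f t ∈ ⋃ i, U i := hcov (hKsub ⟨t, ht, rfl⟩)
    obtain ⟨i, hfi⟩ := Set.mem_iUnion.1 hft
    obtain ⟨C, hC_nhds, hC_closed, hC_sub⟩ :=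
      exists_mem_nhds_isClosed_subset ((hU i).mem_nhds hfi)
    refine ⟨i, interior C, ?_⟩
    have hA_cl : closure (interior C) ⊆ U i :=
      (closure_minimal interior_subset hC_closed).trans hC_sub
    have hftA : f t ∈ interior C := mem_interior_iff_mem_nhds.2 hC_nhds
    rcases lt_or_eq_of_le ht.2 with htlt | hteq
    · -- t < 1 : use right-continuity
      have hrt := hr t ⟨ht.1, htlt⟩
      have hev : {s | f s ∈ interior C} ∈ 𝓝[>] t :=
        hrt (isOpen_interior.mem_nhds hftA)
      obtain ⟨u, hu, hIoo⟩ := mem_nhdsGT_iff_exists_Ioo_subset.1 hev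
      refine ⟨u - t, by linarith [Set.mem_Ioi.1 hu], hA_cl, ?_, ?_⟩
      · intro s hs hts hst
        rcases eq_or_lt_of_le hts with h | h
        · rw [← h]; exact hftA
        · exact hIoo ⟨h, by linarith⟩
      · intro s hs hts hst
        have hIooS : Set.Ioo t s ∈ 𝓝[<] s := Ioo_mem_nhdsLT_of_mem ⟨hts, le_refl s⟩
        have hev' : ∀ᶠ x in 𝓝[<] s, f x ∈ interior C := by
          filter_upwards [hIooS] with x hx
          exact hIoo ⟨hx.1, by linarith [hx.2]⟩
        exact mem_closure_of_tendsto (hgl s hs) hev'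
    · -- t = 1
      refine ⟨1, one_pos, hA_cl, ?_, ?_⟩
      · intro s hs hts hst
        have : s = t := le_antisymm (hteq ▸ hs.2) hts
        rw [this]; exact hftA
      · intro s hs hts hst
        exact absurd (hteq ▸ hs.2 : s ≤ t) (not_le.2 hts)
  -- left structure at each point
  have lkey : ∀ t ∈ Set.Icc (0:ℝ) 1, ∃ j : ι, ∃ δ : ℝ, 0 < δ ∧
      (0 < t → g t ∈ U j) ∧
      (∀ s ∈ Set.Icc (0:ℝ) 1, t - δ < s → s < t →
        f s ∈ U j ∧ (0 < s → g s ∈ U j)) := by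
    intro t ht
    rcases lt_or_eq_of_le ht.1 with htpos | hteq
    · -- 0 < t
      have htIoc : t ∈ Set.Ioc (0:ℝ) 1 := ⟨htpos, ht.2⟩
      have hgt : g t ∈ ⋃ i, U i := hcov (Set.subset_union_right ⟨t, htIoc, rfl⟩)
      obtain ⟨j, hgj⟩ := Set.mem_iUnion.1 hgt
      obtain ⟨C, hC_nhds, hC_closed, hC_sub⟩ :=
        exists_mem_nhds_isClosed_subset ((hU j).mem_nhds hgj)
      have hev : {s | f s ∈ C} ∈ 𝓝[<] t := hgl t htIoc hC_nhds
      obtain ⟨l, hl', hIoo⟩ := mem_nhdsLT_iff_exists_Ioo_subset.1 hev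
      refine ⟨j, t - l, by linarith [Set.mem_Iio.1 hl'], fun _ => hgj, ?_⟩
      intro s hs hls hst
      have hsl : l < s := by linarith
      have hfsC : f s ∈ C := hIoo ⟨hsl, hst⟩
      refine ⟨hC_sub hfsC, fun hspos => ?_⟩
      have hsIoc : s ∈ Set.Ioc (0:ℝ) 1 := ⟨hspos, hs.2⟩
      have hIooS : Set.Ioo l s ∈ 𝓝[<] s := Ioo_mem_nhdsLT_of_mem ⟨hsl, le_refl s⟩
      have hev' : ∀ᶠ x in 𝓝[<] s, f x ∈ C := by
        filter_upwards [hIooS] with x hx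
        exact hIoo ⟨hx.1, by linarith [hx.2]⟩
      have : g s ∈ closure C := mem_closure_of_tendsto (hgl s hsIoc) hev'
      exact hC_sub (hC_closed.closure_eq ▸ this)
    · -- t = 0
      refine ⟨i₀, 1, one_pos, fun h => absurd h (by rw [← hteq]; exact lt_irrefl 0), ?_⟩
      intro s hs hls hst
      exfalso; linarith [hs.1]
  haveI : Inhabited ι := ⟨i₀⟩
  choose! i A δr hδr hAsub hfA hgA using rkey
  choose! j δl hδl hgU hfU using lkey
  -- cover [0,1] by the intervals
  have hcover : Set.Icc (0:ℝ) 1 ⊆ ⋃ t ∈ Set.Icc (0:ℝ) 1, Set.Ioo (t - δl t) (t + δr t) := by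
    intro t ht
    exact Set.mem_biUnion ht ⟨by linarith [hδl t ht], by linarith [hδr t ht]⟩
  obtain ⟨T, hTsub, hTfin, hTcov⟩ :=
    isCompact_Icc.elim_finite_subcover_image (fun t _ => isOpen_Ioo) hcover
  refine ⟨((hTfin.image i).union (hTfin.image j)).toFinset, ?_⟩
  have hmemT : ∀ t ∈ T, ∀ k, (k = i t ∨ k = j t) →
      k ∈ ((hTfin.image i).union (hTfin.image j)).toFinset := by
    intro t htT k hk
    rw [Set.Finite.mem_toFinset]
    rcases hk with h | h
    · exact Or.inl ⟨t, htT, h.symm⟩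
    · exact Or.inr ⟨t, htT, h.symm⟩
  rintro x (⟨s, hs, rfl⟩ | ⟨s, hs, rfl⟩)
  · -- x = f s, s ∈ Icc 0 1
    obtain ⟨t, htT, hst⟩ := Set.mem_iUnion₂.1 (hTcov hs)
    have ht : t ∈ Set.Icc (0:ℝ) 1 := hTsub htT
    rcases le_or_gt t s with h | h
    · refine Set.mem_biUnion (hmemT t htT (i t) (Or.inl rfl)) ?_
      exact hAsub t ht (subset_closure (hfA t ht s hs h hst.2))
    · refine Set.mem_biUnion (hmemT t htT (j t) (Or.inr rfl)) ?_
      exact (hfU t ht s hs hst.1 h).1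
  · -- x = g s, s ∈ Ioc 0 1
    have hsIcc : s ∈ Set.Icc (0:ℝ) 1 := ⟨le_of_lt hs.1, hs.2⟩
    obtain ⟨t, htT, hst⟩ := Set.mem_iUnion₂.1 (hTcov hsIcc)
    have ht : t ∈ Set.Icc (0:ℝ) 1 := hTsub htT
    rcases lt_trichotomy t s with h | h | h
    · refine Set.mem_biUnion (hmemT t htT (i t) (Or.inl rfl)) ?_
      exact hAsub t ht (hgA t ht s hs h hst.2)
    · refine Set.mem_biUnion (hmemT t htT (j t) (Or.inr rfl)) ?_
      rw [← h]
      exact hgU t ht (h ▸ hs.1)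
    · refine Set.mem_biUnion (hmemT t htT (j t) (Or.inr rfl)) ?_
      exact (hfU t ht s hsIcc hst.1 h).2 hs.1
end

section
/- Define f : [0,1] → ℝ by f(0) = f(1) = 0 and f(t) = (t + 1/n)/2 for t ∈ [1/(n+1), 1/n), n ≥ 1. Then f, regarded as a map into ℝ with the K-topology, is càdlàg: it is right-continuous on [0,1) and has left limits at every t ∈ (0,1] (with f(1/n −) = 1/n), yet the set {f(t) : t ∈ [0,1]} ∪ {f(t−) : t ∈ (0,1]} is not compact in the K-topology. -/
open Set Filter Topology

/-- The set K = {1/n : n ∈ ℕ, n ≥ 1}. -/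
def KSet : Set ℝ := {x | ∃ n : ℕ, 0 < n ∧ x = 1 / (n : ℝ)}

/-- The K-topology (Smirnov deleted sequence topology) on ℝ: the topology whose open
sets are the sets `U \ H` with `U` open in the standard topology and `H ⊆ K`. -/
def Ktop : TopologicalSpace ℝ :=
  TopologicalSpace.generateFrom {s | ∃ U H : Set ℝ, IsOpen U ∧ H ⊆ KSet ∧ s = U \ H}

lemma ktop_isOpen_iff {s : Set ℝ} :
    IsOpen[Ktop] s ↔ ∃ U H : Set ℝ, IsOpen U ∧ H ⊆ KSet ∧ s = U \ H := by
  constructor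
  · intro h
    induction h with
    | basic u hu => exact hu
    | univ => exact ⟨univ, ∅, isOpen_univ, empty_subset _, by simp⟩
    | inter u v _ _ ihu ihv =>
      obtain ⟨U, H, hU, hH, rfl⟩ := ihu
      obtain ⟨V, G, hV, hG, rfl⟩ := ihv
      refine ⟨U ∩ V, H ∪ G, hU.inter hV, union_subset hH hG, ?_⟩
      ext x; simp only [mem_inter_iff, mem_diff, mem_union]; tauto
    | sUnion T _ ih =>
      choose U H hU hH hEq using ih
      refine ⟨⋃ t : T, U t t.2, (⋃ t : T, U t t.2) \ ⋃₀ T, ?_, ?_, ?_⟩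
      · exact isOpen_iUnion fun t => hU t t.2
      · rintro x ⟨hx, hx2⟩
        obtain ⟨t, ht⟩ := mem_iUnion.mp hx
        have : x ∉ (t : Set ℝ) := fun h => hx2 ⟨t, t.2, h⟩
        rw [hEq t t.2] at this
        have : x ∈ H t t.2 := by
          by_contra hc; exact this ⟨ht, hc⟩
        exact hH t t.2 this
      · rw [diff_diff_cancel_left]
        intro x hx
        obtain ⟨t, htT, hxt⟩ := hx
        have := hEq t htT ▸ hxt
        exact mem_iUnion.mpr ⟨⟨t, htT⟩, this.1⟩
  · rintro ⟨U, H, hU, hH, rfl⟩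
    exact TopologicalSpace.GenerateOpen.basic _ ⟨U, H, hU, hH, rfl⟩

lemma tendsto_ktop {α : Type*} {l : Filter α} {F : α → ℝ} {x : ℝ}
    (h1 : Tendsto F l (𝓝 x)) (h2 : ∀ᶠ a in l, F a ∉ KSet) :
    Tendsto F l (@nhds ℝ Ktop x) := by
  intro s hs
  rw [@mem_nhds_iff ℝ Ktop x s] at hs
  obtain ⟨t, hts, hto, hxt⟩ := hs
  obtain ⟨U, H, hU, hH, rfl⟩ := ktop_isOpen_iff.mp hto
  rw [mem_map]
  filter_upwards [h2, mem_map.mp (h1 (hU.mem_nhds hxt.1))] with a haK haU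
  exact hts ⟨haU, fun hmem => haK (hH hmem)⟩

lemma ktop_t2 : @T2Space ℝ Ktop := by
  refine @T2Space.mk ℝ Ktop ?_
  intro x y hxy
  obtain ⟨U, V, hU, hV, hxU, hyV, hd⟩ := t2_separation hxy
  exact ⟨U, V, ktop_isOpen_iff.mpr ⟨U, ∅, hU, empty_subset _, (diff_empty).symm⟩,
    ktop_isOpen_iff.mpr ⟨V, ∅, hV, empty_subset _, (diff_empty).symm⟩, hxU, hyV, hd⟩

lemma one_div_succ_lt {n : ℕ} (hn : 0 < n) : 1 / ((n:ℝ)+1) < 1 / (n:ℝ) := by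
  have hn' : (0:ℝ) < n := by exact_mod_cast hn
  apply one_div_lt_one_div_of_lt hn' (by linarith)

lemma notK {n : ℕ} (hn : 0 < n) {x : ℝ} (hx : x ∈ Ioo (1/((n:ℝ)+1)) (1/(n:ℝ))) :
    x ∉ KSet := by
  rintro ⟨m, hm, rfl⟩
  have hn' : (0:ℝ) < n := by exact_mod_cast hn
  have hm' : (0:ℝ) < m := by exact_mod_cast hm
  have h1 : (n:ℝ) < m := by
    have := hx.2
    rwa [one_div_lt_one_div hm' hn'] at this
  have h2 : (m:ℝ) < n + 1 := by
    have := hx.1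
    rwa [one_div_lt_one_div (by linarith : (0:ℝ) < (n:ℝ)+1) hm'] at this
  have h1n : n < m := by exact_mod_cast h1
  have h2n : m < n + 1 := by exact_mod_cast h2
  omega

lemma fval_mem {n : ℕ} (hn : 0 < n) {s : ℝ} (hs : s ∈ Ico (1/((n:ℝ)+1)) (1/(n:ℝ))) :
    (s + 1/(n:ℝ))/2 ∈ Ioo (1/((n:ℝ)+1)) (1/(n:ℝ)) := by
  have h := one_div_succ_lt hn
  exact ⟨by linarith [hs.1], by linarith [hs.2]⟩

lemma exists_right {t : ℝ} (ht : t ∈ Ioo (0:ℝ) 1) :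
    ∃ n : ℕ, 0 < n ∧ t ∈ Ico (1/((n:ℝ)+1)) (1/(n:ℝ)) := by
  have ht0 := ht.1
  have h1t : 1 < 1/t := by rw [lt_div_iff₀ ht0]; linarith [ht.2]
  set m := ⌈1/t⌉₊ with hm
  have hm2 : 2 ≤ m := by
    have : 1 < m := Nat.lt_ceil.mpr (by exact_mod_cast h1t)
    omega
  refine ⟨m - 1, by omega, ?_, ?_⟩
  · have hle : 1/t ≤ (m:ℝ) := Nat.le_ceil _
    have hcast : ((m-1:ℕ):ℝ) + 1 = (m:ℝ) := by
      have : (1:ℕ) ≤ m := by omega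
      push_cast [Nat.cast_sub this]; ring
    rw [hcast]
    have hmpos : (0:ℝ) < (m:ℝ) := by positivity
    rw [div_le_iff₀ ht0] at hle
    rw [div_le_iff₀ hmpos]
    linarith
  · have hlt : ((m-1:ℕ):ℝ) < 1/t := Nat.lt_ceil.mp (by omega)
    have hpos : (0:ℝ) < ((m-1:ℕ):ℝ) := by
      have : (1:ℕ) ≤ m - 1 := by omega
      exact_mod_cast Nat.lt_of_lt_of_le Nat.zero_lt_one this
    rw [lt_div_iff₀ ht0] at hlt
    rw [lt_div_iff₀ hpos]
    linarith

lemma exists_left {t : ℝ} (ht : t ∈ Ioc (0:ℝ) 1) :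
    ∃ n : ℕ, 0 < n ∧ 1/((n:ℝ)+1) < t ∧ t ≤ 1/(n:ℝ) := by
  have ht0 := ht.1
  have h1t : 1 ≤ 1/t := by rw [le_div_iff₀ ht0]; linarith [ht.2]
  set n := ⌊1/t⌋₊ with hn
  have hn1 : 1 ≤ n := Nat.le_floor (by exact_mod_cast h1t)
  have hnpos : (0:ℝ) < n := by exact_mod_cast hn1
  refine ⟨n, hn1, ?_, ?_⟩
  · have := Nat.lt_floor_add_one (1/t)
    rw [div_lt_iff₀ ht0] at this
    rw [div_lt_iff₀ (by linarith : (0:ℝ) < (n:ℝ)+1)]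
    linarith
  · have := Nat.floor_le (le_of_lt (by positivity : (0:ℝ) < 1/t))
    rw [le_div_iff₀ ht0] at this
    rw [le_div_iff₀ hnpos]
    linarith

lemma tendsto_left_aux (f : ℝ → ℝ)
    (hfn : ∀ n : ℕ, 0 < n → ∀ t ∈ Set.Ico (1 / ((n : ℝ) + 1)) (1 / (n : ℝ)),
      f t = (t + 1 / (n : ℝ)) / 2)
    {n : ℕ} (hn : 0 < n) {t : ℝ} (ht1 : 1/((n:ℝ)+1) < t) (ht2 : t ≤ 1/(n:ℝ)) :
    Tendsto f (𝓝[<] t) (@nhds ℝ Ktop ((t + 1/(n:ℝ))/2)) := by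
  have hmem : Ioo (1/((n:ℝ)+1)) t ∈ 𝓝[<] t :=
    Ioo_mem_nhdsLT_of_mem ⟨ht1, le_refl t⟩
  have heq : ∀ s ∈ Ioo (1/((n:ℝ)+1)) t, f s = (s + 1/(n:ℝ))/2 := fun s hs =>
    hfn n hn s ⟨hs.1.le, lt_of_lt_of_le hs.2 ht2⟩
  apply tendsto_ktop
  · apply Tendsto.congr' (Filter.eventuallyEq_of_mem hmem fun s hs => (heq s hs).symm)
    exact ((continuous_id.add continuous_const).div_const 2).tendsto t |>.mono_left
      nhdsWithin_le_nhds
  · filter_upwards [hmem] with s hs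
    rw [heq s hs]
    exact notK hn (fval_mem hn ⟨hs.1.le, lt_of_lt_of_le hs.2 ht2⟩)

/-- The function `f` with `f 0 = f 1 = 0` and `f t = (t + 1/n)/2` on `[1/(n+1), 1/n)`,
viewed as a map into ℝ with the K-topology, is càdlàg (right-continuous on `[0,1)` with
left limits on `(0,1]`, the left limit at `1/n` being `1/n`), yet the set
`{f t : t ∈ [0,1]} ∪ {f(t−) : t ∈ (0,1]}` is not compact in the K-topology. -/
theorem cadlag_into_Ktop_range_not_compact (f : ℝ → ℝ)
    (hf0 : f 0 = 0) (hf1 : f 1 = 0)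
    (hfn : ∀ n : ℕ, 0 < n → ∀ t ∈ Set.Ico (1 / ((n : ℝ) + 1)) (1 / (n : ℝ)),
      f t = (t + 1 / (n : ℝ)) / 2) :
    (∀ t ∈ Set.Ico (0:ℝ) 1, Tendsto f (𝓝[>] t) (@nhds ℝ Ktop (f t))) ∧
    (∀ t ∈ Set.Ioc (0:ℝ) 1, ∃ L, Tendsto f (𝓝[<] t) (@nhds ℝ Ktop L)) ∧
    (∀ n : ℕ, 0 < n → Tendsto f (𝓝[<] (1 / (n : ℝ))) (@nhds ℝ Ktop (1 / (n : ℝ)))) ∧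
    (∀ g : ℝ → ℝ, (∀ t ∈ Set.Ioc (0:ℝ) 1, Tendsto f (𝓝[<] t) (@nhds ℝ Ktop (g t))) →
      ¬ @IsCompact ℝ Ktop (f '' Set.Icc 0 1 ∪ g '' Set.Ioc 0 1)) := by
  -- facts about f on (0,1)
  have hfIoo : ∀ s ∈ Ioo (0:ℝ) 1, f s ∉ KSet ∧ 0 ≤ f s ∧ f s ≤ 2 * s := by
    intro s hs
    obtain ⟨n, hn, hsn⟩ := exists_right hs
    have hv := fval_mem hn hsn
    rw [hfn n hn s hsn]
    have hn' : (1:ℝ) ≤ (n:ℝ) := by exact_mod_cast hn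
    have h1 : (0:ℝ) < 1/((n:ℝ)+1) := by positivity
    have h2 : (1:ℝ)/(n:ℝ) ≤ 2 * (1/((n:ℝ)+1)) := by
      rw [div_le_iff₀ (by linarith : (0:ℝ) < (n:ℝ))]
      rw [mul_one_div, div_mul_eq_mul_div, le_div_iff₀ (by linarith : (0:ℝ) < (n:ℝ)+1)]
      ring_nf
      linarith
    refine ⟨notK hn hv, le_of_lt (lt_trans h1 hv.1), ?_⟩
    calc (s + 1/(n:ℝ))/2 ≤ 1/(n:ℝ) := hv.2.le
    _ ≤ 2 * (1/((n:ℝ)+1)) := h2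
    _ ≤ 2 * s := by nlinarith [hsn.1]
  -- part 3
  have part3 : ∀ n : ℕ, 0 < n → Tendsto f (𝓝[<] (1 / (n : ℝ))) (@nhds ℝ Ktop (1 / (n : ℝ))) := by
    intro n hn
    have := tendsto_left_aux f hfn hn (one_div_succ_lt hn) (le_refl _)
    have heq : (1/(n:ℝ) + 1/(n:ℝ))/2 = 1/(n:ℝ) := by ring
    rwa [heq] at this
  -- part 1
  have part1 : ∀ t ∈ Set.Ico (0:ℝ) 1, Tendsto f (𝓝[>] t) (@nhds ℝ Ktop (f t)) := by
    rintro t ⟨ht0, ht1⟩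
    rcases eq_or_lt_of_le ht0 with rfl | htpos
    · rw [hf0]
      have hmem : Ioo (0:ℝ) 1 ∈ 𝓝[>] (0:ℝ) := Ioo_mem_nhdsGT_of_mem ⟨le_refl _, zero_lt_one⟩
      apply tendsto_ktop
      · apply squeeze_zero' (Filter.eventually_of_mem hmem fun s hs => (hfIoo s hs).2.1)
          (Filter.eventually_of_mem hmem fun s hs => (hfIoo s hs).2.2)
        have : Tendsto (fun s : ℝ => 2 * s) (𝓝 (0:ℝ)) (𝓝 (2 * 0)) :=
          (continuous_const.mul continuous_id).tendsto 0
        simpa using this.mono_left nhdsWithin_le_nhds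
      · filter_upwards [hmem] with s hs using (hfIoo s hs).1
    · obtain ⟨n, hn, htn⟩ := exists_right ⟨htpos, ht1⟩
      rw [hfn n hn t htn]
      have hmem : Ioo t (1/(n:ℝ)) ∈ 𝓝[>] t := Ioo_mem_nhdsGT_of_mem ⟨le_refl t, htn.2⟩
      have hsub : ∀ s ∈ Ioo t (1/(n:ℝ)), s ∈ Ico (1/((n:ℝ)+1)) (1/(n:ℝ)) := fun s hs =>
        ⟨le_trans htn.1 hs.1.le, hs.2⟩
      apply tendsto_ktop
      · apply Tendsto.congr' (Filter.eventuallyEq_of_mem hmem fun s hs =>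
          (hfn n hn s (hsub s hs)).symm)
        exact ((continuous_id.add continuous_const).div_const 2).tendsto t |>.mono_left
          nhdsWithin_le_nhds
      · filter_upwards [hmem] with s hs
        rw [hfn n hn s (hsub s hs)]
        exact notK hn (fval_mem hn (hsub s hs))
  -- part 2
  have part2 : ∀ t ∈ Set.Ioc (0:ℝ) 1, ∃ L, Tendsto f (𝓝[<] t) (@nhds ℝ Ktop L) := by
    intro t ht
    obtain ⟨n, hn, h1, h2⟩ := exists_left ht
    exact ⟨_, tendsto_left_aux f hfn hn h1 h2⟩
  refine ⟨part1, part2, part3, ?_⟩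
  -- part 4
  intro g hg hcomp
  have hgK : ∀ m : ℕ, 0 < m → g (1/(m:ℝ)) = 1/(m:ℝ) := by
    intro m hm
    have hm' : (0:ℝ) < m := by exact_mod_cast hm
    have hmem : (1:ℝ)/m ∈ Set.Ioc (0:ℝ) 1 := ⟨by positivity, by
      rw [div_le_one hm']; exact_mod_cast hm⟩
    exact @tendsto_nhds_unique ℝ ℝ Ktop ktop_t2 f (𝓝[<] (1/(m:ℝ))) _ _
      (nhdsLT_neBot _) (hg _ hmem) (part3 m hm)
  -- open cover
  set c : ℕ → Set ℝ := fun m => if m = 0 then univ \ KSet else Ioo (1/((m:ℝ)+1)) 2 with hc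
  have hcopen : ∀ m, IsOpen[Ktop] (c m) := by
    intro m
    rcases Nat.eq_zero_or_pos m with rfl | hm
    · exact ktop_isOpen_iff.mpr ⟨univ, KSet, isOpen_univ, subset_rfl, by simp [hc]⟩
    · refine ktop_isOpen_iff.mpr ⟨Ioo (1/((m:ℝ)+1)) 2, ∅, isOpen_Ioo, empty_subset _, ?_⟩
      rw [hc]; simp only [if_neg hm.ne', diff_empty]
  have hKmem : ∀ m : ℕ, 0 < m → (1:ℝ)/m ∈ c m := by
    intro m hm
    have hm' : (0:ℝ) < m := by exact_mod_cast hm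
    have : (1:ℝ)/m ≤ 1 := by rw [div_le_one hm']; exact_mod_cast hm
    show (1:ℝ)/m ∈ c m
    rw [hc]
    simp only [if_neg hm.ne']
    exact ⟨one_div_succ_lt hm, by linarith⟩
  have hcover : (f '' Set.Icc 0 1 ∪ g '' Set.Ioc 0 1) ⊆ ⋃ i, c i := by
    intro x _
    by_cases hx : x ∈ KSet
    · obtain ⟨m, hm, rfl⟩ := hx
      exact mem_iUnion.mpr ⟨m, hKmem m hm⟩
    · exact mem_iUnion.mpr ⟨0, by simp [hc, hx]⟩
  obtain ⟨s, hs⟩ := @IsCompact.elim_finite_subcover ℝ Ktop _ ℕ hcomp c hcopen hcover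
  set m := s.sup id + 1 with hmdef
  have hminA : (1:ℝ)/m ∈ f '' Set.Icc 0 1 ∪ g '' Set.Ioc 0 1 := by
    right
    have hm' : (0:ℝ) < (m:ℕ) := by positivity
    refine ⟨1/(m:ℝ), ⟨by positivity, ?_⟩, hgK m (by omega)⟩
    rw [div_le_one (by positivity)]
    exact_mod_cast Nat.one_le_iff_ne_zero.mpr (by omega)
  obtain ⟨i, his, hxi⟩ := mem_iUnion₂.mp (hs hminA)
  rcases Nat.eq_zero_or_pos i with rfl | hi
  · simp only [hc, if_pos rfl] at hxi
    exact hxi.2 ⟨m, by omega, rfl⟩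
  · simp only [hc, if_neg hi.ne'] at hxi
    have h1 : (1:ℝ)/((i:ℝ)+1) < 1/(m:ℝ) := hxi.1
    have hmpos : (0:ℝ) < (m:ℝ) := by exact_mod_cast Nat.succ_pos _
    have h2 : (m:ℝ) < (i:ℝ)+1 := by
      rwa [one_div_lt_one_div (by linarith : (0:ℝ) < (i:ℝ)+1) hmpos] at h1
    have h3 : m < i + 1 := by exact_mod_cast h2
    have h4 : i ≤ s.sup id := Finset.le_sup (f := id) his
    omega
end

section
/- With f : [0,1] → ℝ_K as above (f(0)=f(1)=0, f(t) = (t+1/n)/2 on [1/(n+1), 1/n)), the natural extension of f to the split interval Î, given by f(t+) = f(t) and f(t−) = left limit, is not continuous at the point 0+: the points (1/n)− converge to 0+ in Î but f((1/n)−) = 1/n does not converge to f(0) = 0 in the K-topology. -/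
open Set Filter Topology

lemma Ktop_le_std : Ktop ≤ (inferInstance : TopologicalSpace ℝ) := by
  intro s hs
  exact TopologicalSpace.GenerateOpen.basic s ⟨s, ∅, hs, empty_subset _, (diff_empty).symm⟩

lemma leftlim_std (f : ℝ → ℝ)
    (hfn : ∀ n : ℕ, 0 < n → ∀ t ∈ Set.Ico (1 / ((n : ℝ) + 1)) (1 / (n : ℝ)),
      f t = (t + 1 / (n : ℝ)) / 2) (n : ℕ) :
    Tendsto f (𝓝[<] (1 / ((n : ℝ) + 1))) (𝓝 (1 / ((n : ℝ) + 1))) := by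
  set t : ℝ := 1 / ((n : ℝ) + 1) with ht
  have hne : (1 : ℝ) / ((n : ℝ) + 2) < t := by
    rw [ht, div_lt_div_iff₀ (by positivity) (by positivity)]; norm_num
  have hmem : Set.Ico (1 / ((n : ℝ) + 2)) t ∈ 𝓝[<] t :=
    Ico_mem_nhdsLT_of_mem ⟨hne, le_refl t⟩
  have hbase : Tendsto (fun s : ℝ => (s + t) / 2) (𝓝[<] t) (𝓝 ((t + t) / 2)) :=
    Tendsto.mono_left (((continuous_id.add continuous_const).div_const 2).tendsto t)
      nhdsWithin_le_nhds
  rw [show (t + t) / 2 = t by ring] at hbase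
  refine hbase.congr' (Filter.eventually_of_mem hmem fun s hs => ?_)
  have := hfn (n + 1) (Nat.succ_pos n) s (by push_cast; convert hs using 3 <;> ring)
  push_cast at this
  rw [this]

/-- For `f` as in the example (`f 0 = f 1 = 0`, `f t = (t + 1/n)/2` on `[1/(n+1), 1/n)`),
with left limits `g` in the K-topology, the natural extension of `f` to the split
interval (`t+ ↦ f t`, `t− ↦ g t`) is not continuous at `0+`: the points `(1/(n+1))−`
converge to `0+` in the split interval, but the left limits `g (1/(n+1)) = 1/(n+1)` do
not converge to `f 0 = 0` in the K-topology. -/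
theorem splitInterval_extension_into_Ktop_not_continuous (f g : ℝ → ℝ)
    (hf0 : f 0 = 0) (hf1 : f 1 = 0)
    (hfn : ∀ n : ℕ, 0 < n → ∀ t ∈ Set.Ico (1 / ((n : ℝ) + 1)) (1 / (n : ℝ)),
      f t = (t + 1 / (n : ℝ)) / 2)
    (hg : ∀ t ∈ Set.Ioc (0:ℝ) 1, Tendsto f (𝓝[<] t) (@nhds ℝ Ktop (g t))) :
    Tendsto (fun n : ℕ => siMinus (1 / ((n : ℝ) + 1))
        ⟨by positivity, by
          rw [div_le_one (by positivity)]
          have := (Nat.cast_nonneg n : (0:ℝ) ≤ n); linarith⟩)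
      atTop (𝓝 (siPlus 0 (by norm_num))) ∧
    (∀ n : ℕ, g (1 / ((n : ℝ) + 1)) = 1 / ((n : ℝ) + 1)) ∧
    ¬ Tendsto (fun n : ℕ => g (1 / ((n : ℝ) + 1))) atTop (@nhds ℝ Ktop (f 0)) ∧
    ¬ @ContinuousAt SI ℝ _ Ktop
      (fun v : SI => if (ofLex v.1).2 = true then f (ofLex v.1).1 else g (ofLex v.1).1)
      (siPlus 0 (by norm_num)) := by
  have hmem : ∀ n : ℕ, (1 : ℝ) / ((n : ℝ) + 1) ∈ Set.Ioc (0:ℝ) 1 := by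
    intro n
    constructor
    · positivity
    · rw [div_le_one (by positivity)]
      have := (Nat.cast_nonneg n : (0:ℝ) ≤ n); linarith
  -- claim 2
  have h2 : ∀ n : ℕ, g (1 / ((n : ℝ) + 1)) = 1 / ((n : ℝ) + 1) := by
    intro n
    have hstd : Tendsto f (𝓝[<] (1 / ((n : ℝ) + 1))) (𝓝 (g (1 / ((n : ℝ) + 1)))) :=
      (hg _ (hmem n)).mono_right (nhds_mono Ktop_le_std)
    exact tendsto_nhds_unique hstd (leftlim_std f hfn n)
  -- claim 1
  have h1 : Tendsto (fun n : ℕ => siMinus (1 / ((n : ℝ) + 1))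
        ⟨by positivity, by
          rw [div_le_one (by positivity)]
          have := (Nat.cast_nonneg n : (0:ℝ) ≤ n); linarith⟩)
      atTop (𝓝 (siPlus 0 (by norm_num))) := by
    rw [tendsto_order]
    constructor
    · intro l hl
      exfalso
      have hlt : l.1 < toLex ((0:ℝ), true) := hl
      rcases Prod.Lex.lt_iff.1 hlt with h | ⟨h, h'⟩
      · exact absurd h (not_lt.2 l.2.1.1)
      · have htrue : (ofLex l.1).2 = true := l.2.2 h
        rw [htrue] at h'
        exact lt_irrefl _ h'
    · intro u hu
      have hlt : toLex ((0:ℝ), true) < u.1 := hu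
      have hu1 : (0:ℝ) < (ofLex u.1).1 := by
        rcases Prod.Lex.lt_iff.1 hlt with h | ⟨h, h'⟩
        · exact h
        · exact absurd h' (by simp [Bool.lt_iff])
      have hev := (tendsto_one_div_add_atTop_nhds_zero_nat).eventually (gt_mem_nhds hu1)
      filter_upwards [hev] with n hn
      have : (toLex ((1:ℝ)/((n:ℝ)+1), false) : SIP) < toLex (ofLex u.1) :=
        Prod.Lex.lt_iff.2 (Or.inl hn)
      exact this
  -- claim 3
  have h3 : ¬ Tendsto (fun n : ℕ => g (1 / ((n : ℝ) + 1))) atTop (@nhds ℝ Ktop (f 0)) := by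
    intro h
    rw [hf0] at h
    have hopen : IsOpen[Ktop] (Set.Ioo (-1:ℝ) 1 \ KSet) :=
      TopologicalSpace.GenerateOpen.basic _ ⟨_, _, isOpen_Ioo, le_refl KSet, rfl⟩
    have h0mem : (0:ℝ) ∈ Set.Ioo (-1:ℝ) 1 \ KSet := by
      refine ⟨by norm_num, ?_⟩
      rintro ⟨m, hm, hm'⟩
      have : (0:ℝ) < 1 / (m:ℝ) := by positivity
      rw [← hm'] at this
      exact lt_irrefl _ this
    have hnb : Set.Ioo (-1:ℝ) 1 \ KSet ∈ @nhds ℝ Ktop 0 := @IsOpen.mem_nhds ℝ Ktop _ _ hopen h0mem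
    obtain ⟨n, hn⟩ := (h.eventually (Filter.eventually_of_mem hnb fun x hx => hx)).exists
    exact hn.2 ⟨n + 1, Nat.succ_pos n, by rw [h2 n]; push_cast; ring⟩
  refine ⟨h1, h2, h3, ?_⟩
  intro hc
  apply h3
  have hT := Filter.Tendsto.comp (hc : Filter.Tendsto _ _ _) h1
  have hFp : (fun v : SI => if (ofLex v.1).2 = true then f (ofLex v.1).1 else g (ofLex v.1).1)
      (siPlus 0 (by norm_num)) = f 0 := by simp [siPlus]
  rw [hFp] at hT
  exact hT.congr fun n => by simp [Function.comp, siMinus]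
end

section
/- Let E be a set with two families of pseudometrics {d_i}_{i∈I} and {ζ_j}_{j∈J}, each separating points and directed under pointwise maxima, generating topologies τ and σ respectively with τ ⊆ σ (τ coarser). Then every σ-càdlàg function [0,1] → E is τ-càdlàg, and on the space D([0,1],E,σ) of σ-càdlàg functions the topology generated by the Skorohod pseudometrics {ζ̃_j}_{j∈J} is finer than the topology generated by the Skorohod pseudometrics {d̃_i}_{i∈I}. -/
open Set Filter Topology

/-- A pseudometric on a set `E`: vanishes on the diagonal, symmetric, triangle
inequality (nonnegativity follows). -/
def IsPseudometric {E : Type*} (d : E → E → ℝ) : Prop :=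
  (∀ a, d a a = 0) ∧ (∀ a b, d a b = d b a) ∧ (∀ a b c, d a c ≤ d a b + d b c)

/-- The topology on `E` generated by a family of pseudometrics: the coarsest topology
making every map `x ↦ d i a x` continuous. -/
def pseudoTop {E : Type*} {ι : Sort*} (d : ι → E → E → ℝ) : TopologicalSpace E :=
  ⨅ (i : ι) (a : E), TopologicalSpace.induced (fun x => d i a x) inferInstance

/-- A function `f : ℝ → E` is càdlàg on `[0,1]`: right-continuous at every `t ∈ [0,1)`
and with left limits at every `t ∈ (0,1]`. -/
def Cadlag {E : Type*} [TopologicalSpace E] (f : ℝ → E) : Prop :=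
  (∀ t ∈ Set.Ico (0:ℝ) 1, Filter.Tendsto f (𝓝[>] t) (𝓝 (f t))) ∧
  (∀ t ∈ Set.Ioc (0:ℝ) 1, ∃ L, Filter.Tendsto f (𝓝[<] t) (𝓝 L))

/-- The set Λ of strictly increasing continuous maps of `[0,1]` onto itself. -/
def SkLambda : Set (ℝ → ℝ) :=
  {l | ContinuousOn l (Set.Icc 0 1) ∧ StrictMonoOn l (Set.Icc 0 1) ∧
    l '' Set.Icc 0 1 = Set.Icc 0 1}

/-- The Skorohod pseudometric associated to a pseudometric `d` on `E`:
`d̃(x,y) = inf_{λ∈Λ} max( sup_t |λ t − t|, sup_t d (x (λ t)) (y t) )`. -/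
noncomputable def skDist {E : Type*} (d : E → E → ℝ) (x y : ℝ → E) : ℝ :=
  sInf {r | ∃ l ∈ SkLambda,
    r = max (⨆ t : Set.Icc (0:ℝ) 1, |l t - (t : ℝ)|)
            (⨆ t : Set.Icc (0:ℝ) 1, d (x (l t)) (y t))}

/-- The Skorohod topology on a set `D` of functions `[0,1] → E` generated by the Skorohod
pseudometrics associated to a family of pseudometrics on `E`. -/
noncomputable def skTop {E : Type*} {κ : Type*} (D : Set (ℝ → E)) (fam : κ → E → E → ℝ) :
    TopologicalSpace D :=
  ⨅ (k : κ) (x : D), TopologicalSpace.induced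
    (fun y : D => skDist (fam k) (x : ℝ → E) (y : ℝ → E)) inferInstance

/-! ### Auxiliary lemmas -/

section SkAux

lemma sk_psd_nonneg {E : Type*} {e : E → E → ℝ} (he : IsPseudometric e) (a b : E) :
    0 ≤ e a b := by
  have h := he.2.2 a b a
  rw [he.1, he.2.1 b a] at h
  linarith

lemma sk_abs_sub_le {E : Type*} {e : E → E → ℝ} (he : IsPseudometric e) (a p x : E) :
    |e a x - e a p| ≤ e p x := by
  rw [abs_sub_le_iff]
  constructor
  · have := he.2.2 a p x; linarith
  · have := he.2.2 a x p; have h2 := he.2.1 x p; linarith [he.2.1 p x]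

lemma sk_ball_open {E : Type*} {ι : Sort*} (ζ : ι → E → E → ℝ) (j : ι) (a : E) (ε : ℝ) :
    IsOpen[pseudoTop ζ] {x | ζ j a x < ε} := by
  letI := pseudoTop ζ
  have hc : Continuous fun x => ζ j a x := by
    rw [continuous_iff_le_induced]
    exact iInf_le_of_le j (iInf_le _ a)
  exact isOpen_Iio.preimage hc

lemma sk_nhds_ball {E : Type*} {J : Type*} [Nonempty J] {ζ : J → E → E → ℝ}
    (hζ : ∀ j, IsPseudometric (ζ j))
    (hζdir : ∀ j j', ∃ k, ∀ a b, max (ζ j a b) (ζ j' a b) ≤ ζ k a b)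
    {p : E} {U : Set E} (hU : IsOpen[pseudoTop ζ] U) (hp : p ∈ U) :
    ∃ j, ∃ δ > 0, ∀ x, ζ j p x < δ → x ∈ U := by
  haveI : Nonempty E := ⟨p⟩
  letI := pseudoTop ζ
  have hmem : U ∈ @nhds E (pseudoTop ζ) p := hU.mem_nhds hp
  have hrw : @nhds E (pseudoTop ζ) p
      = ⨅ q : J × E, comap (fun x => ζ q.1 q.2 x) (𝓝 (ζ q.1 q.2 p)) := by
    show @nhds E (⨅ (i : J) (a : E), TopologicalSpace.induced (fun x => ζ i a x) inferInstance) p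
      = _
    rw [_root_.nhds_iInf]
    conv_rhs => rw [iInf_prod]
    exact iInf_congr fun j => by
      rw [_root_.nhds_iInf]; exact iInf_congr fun a => nhds_induced _ _
  rw [hrw] at hmem
  have hdir : Directed (· ≥ ·)
      (fun q : J × E => comap (fun x => ζ q.1 q.2 x) (𝓝 (ζ q.1 q.2 p))) := by
    rintro ⟨j, a⟩ ⟨j', a'⟩
    obtain ⟨k, hk⟩ := hζdir j j'
    have key : ∀ (j₀ : J) (a₀ : E), (∀ x y, ζ j₀ x y ≤ ζ k x y) →
        comap (fun x => ζ k p x) (𝓝 (ζ k p p)) ≤ comap (fun x => ζ j₀ a₀ x) (𝓝 (ζ j₀ a₀ p)) := by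
      intro j₀ a₀ hj₀
      intro s hs
      rw [mem_comap] at hs ⊢
      obtain ⟨t, ht, hsub⟩ := hs
      rw [Metric.mem_nhds_iff] at ht
      obtain ⟨ε, hε, hball⟩ := ht
      refine ⟨Metric.ball (ζ k p p) ε, Metric.ball_mem_nhds _ hε, ?_⟩
      intro x hx
      simp only [mem_preimage, Metric.mem_ball, Real.dist_eq, (hζ k).1] at hx
      apply hsub
      apply mem_preimage.2
      apply hball
      rw [Metric.mem_ball, Real.dist_eq]
      calc |ζ j₀ a₀ x - ζ j₀ a₀ p| ≤ ζ j₀ p x := sk_abs_sub_le (hζ j₀) _ _ _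
        _ ≤ ζ k p x := hj₀ p x
        _ ≤ |ζ k p x - 0| := by rw [sub_zero]; exact le_abs_self _
        _ < ε := by simpa using hx
    exact ⟨(k, p), key j a fun x y => le_trans (le_max_left _ _) (hk x y),
      key j' a' fun x y => le_trans (le_max_right _ _) (hk x y)⟩
  rw [mem_iInf_of_directed hdir] at hmem
  obtain ⟨⟨j, a⟩, hja⟩ := hmem
  rw [mem_comap] at hja
  obtain ⟨t, ht, hsub⟩ := hja
  rw [Metric.mem_nhds_iff] at ht
  obtain ⟨ε, hε, hball⟩ := ht
  refine ⟨j, ε, hε, ?_⟩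
  intro x hx
  apply hsub
  apply mem_preimage.2
  apply hball
  rw [Metric.mem_ball, Real.dist_eq]
  calc |ζ j a x - ζ j a p| ≤ ζ j p x := sk_abs_sub_le (hζ j) _ _ _
    _ < ε := hx

end SkAux

lemma sk_finset_dom {E : Type*} {J : Type*} [Nonempty J] {ζ : J → E → E → ℝ}
    (hζdir : ∀ j j', ∃ k, ∀ a b, max (ζ j a b) (ζ j' a b) ≤ ζ k a b) (S : Finset J) :
    ∃ k, ∀ j ∈ S, ∀ a b, ζ j a b ≤ ζ k a b := by
  classical
  induction S using Finset.induction_on with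
  | empty => exact ⟨Classical.arbitrary J, by simp⟩
  | @insert j S hj ih =>
    obtain ⟨k₀, hk₀⟩ := ih
    obtain ⟨k, hk⟩ := hζdir j k₀
    refine ⟨k, fun j' hj' a b => ?_⟩
    rcases Finset.mem_insert.1 hj' with h | h
    · subst h; exact le_trans (le_max_left _ _) (hk a b)
    · exact le_trans (hk₀ j' h a b) (le_trans (le_max_right _ _) (hk a b))

lemma sk_cadlag_cover {E : Type*} {J : Type*} {ζ : J → E → E → ℝ}
    (hζ : ∀ j, IsPseudometric (ζ j)) {e : E → E → ℝ}
    (hopen : ∀ (p : E) (ε : ℝ), 0 < ε → ∃ j, ∃ δ > 0, ∀ b, ζ j p b < δ → e p b < ε)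
    {f : ℝ → E} (hf : @Cadlag E (pseudoTop ζ) f) {ε : ℝ} (hε : 0 < ε) :
    ∃ (jc : E → J) (δc : E → ℝ), (∀ p, 0 < δc p) ∧
      (∀ p b, ζ (jc p) p b < δc p → e p b < ε) ∧
      ∃ F : Finset E, F.Nonempty ∧
        (∀ t ∈ Icc (0:ℝ) 1, ∃ p ∈ F, ζ (jc p) p (f t) < δc p / 2) := by
  classical
  letI := pseudoTop ζ
  choose jc δc hδpos hδ using fun p => hopen p ε hε
  refine ⟨jc, δc, hδpos, hδ, ?_⟩
  set A : Set ℝ := {u | u ∈ Icc (0:ℝ) 1 ∧ ∃ F : Finset E,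
    ∀ t ∈ Icc (0:ℝ) u, ∃ p ∈ F, ζ (jc p) p (f t) < δc p / 2} with hA
  have h0A : (0:ℝ) ∈ A := by
    refine ⟨by norm_num, {f 0}, fun t ht => ?_⟩
    have ht0 : t = 0 := le_antisymm ht.2 ht.1
    subst ht0
    exact ⟨f 0, Finset.mem_singleton_self _, by rw [(hζ _).1]; exact half_pos (hδpos _)⟩
  have hAne : A.Nonempty := ⟨0, h0A⟩
  have hbdd : BddAbove A := ⟨1, fun u hu => hu.1.2⟩
  set u₀ := sSup A with hu₀
  have hu₀0 : 0 ≤ u₀ := le_csSup hbdd h0A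
  have hu₀1 : u₀ ≤ 1 := csSup_le hAne fun u hu => hu.1.2
  have hu₀A : u₀ ∈ A := by
    rcases eq_or_lt_of_le hu₀0 with h | h
    · exact h ▸ h0A
    · obtain ⟨L, hL⟩ := hf.2 u₀ ⟨h, hu₀1⟩
      have hV : f ⁻¹' {x | ζ (jc L) L x < δc L / 2} ∈ 𝓝[<] u₀ := by
        apply hL
        refine (sk_ball_open ζ (jc L) L _).mem_nhds ?_
        simp only [mem_setOf_eq, (hζ _).1]
        exact half_pos (hδpos L)
      rw [mem_nhdsLT_iff_exists_Ioo_subset] at hV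
      obtain ⟨a, ha, hsub⟩ := hV
      obtain ⟨u, huA, hau⟩ := exists_lt_of_lt_csSup hAne ha
      obtain ⟨F, hF⟩ := huA.2
      refine ⟨⟨hu₀0, hu₀1⟩, insert L (insert (f u₀) F), fun t ht => ?_⟩
      rcases le_or_gt t u with h1 | h1
      · obtain ⟨p, hp, hpt⟩ := hF t ⟨ht.1, h1⟩
        exact ⟨p, by simp [hp], hpt⟩
      · rcases eq_or_lt_of_le ht.2 with h2 | h2
        · refine ⟨f u₀, by simp, ?_⟩
          rw [h2, (hζ _).1]
          exact half_pos (hδpos _)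
        · have : f t ∈ {x | ζ (jc L) L x < δc L / 2} := hsub ⟨lt_trans hau h1, h2⟩
          exact ⟨L, by simp, this⟩
  have h1A : (1:ℝ) ∈ A := by
    rcases eq_or_lt_of_le hu₀1 with h | h
    · exact h ▸ hu₀A
    · exfalso
      have hrc := hf.1 u₀ ⟨hu₀0, h⟩
      have hV : f ⁻¹' {x | ζ (jc (f u₀)) (f u₀) x < δc (f u₀) / 2} ∈ 𝓝[>] u₀ := by
        apply hrc
        refine (sk_ball_open ζ (jc (f u₀)) (f u₀) _).mem_nhds ?_
        simp only [mem_setOf_eq, (hζ _).1]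
        exact half_pos (hδpos _)
      rw [mem_nhdsGT_iff_exists_Ioo_subset] at hV
      obtain ⟨b, hb, hsub⟩ := hV
      obtain ⟨F, hF⟩ := hu₀A.2
      have hbu : u₀ < b := hb
      have hu'A : min ((u₀ + b)/2) 1 ∈ A := by
        refine ⟨⟨le_min (by linarith) zero_le_one, min_le_right _ _⟩,
          insert (f u₀) F, fun t ht => ?_⟩
        rcases le_or_gt t u₀ with h1 | h1
        · obtain ⟨p, hp, hpt⟩ := hF t ⟨ht.1, h1⟩
          exact ⟨p, by simp [hp], hpt⟩
        · have htb : t < b := lt_of_le_of_lt (le_trans ht.2 (min_le_left _ _)) (by linarith)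
          have : f t ∈ {x | ζ (jc (f u₀)) (f u₀) x < δc (f u₀) / 2} := hsub ⟨h1, htb⟩
          exact ⟨f u₀, by simp, this⟩
      have := le_csSup hbdd hu'A
      have hgt : u₀ < min ((u₀ + b)/2) 1 := lt_min (by linarith) h
      linarith
  obtain ⟨-, F, hF⟩ := h1A
  have hFne : F.Nonempty := by
    obtain ⟨p, hp, -⟩ := hF 0 (by norm_num)
    exact ⟨p, hp⟩
  exact ⟨F, hFne, hF⟩

lemma sk_cadlag_uniform {E : Type*} {J : Type*} [Nonempty J] {ζ : J → E → E → ℝ}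
    (hζ : ∀ j, IsPseudometric (ζ j))
    (hζdir : ∀ j j', ∃ k, ∀ a b, max (ζ j a b) (ζ j' a b) ≤ ζ k a b)
    {e : E → E → ℝ} (he : IsPseudometric e)
    (hopen : ∀ (p : E) (ε : ℝ), 0 < ε → ∃ j, ∃ δ > 0, ∀ b, ζ j p b < δ → e p b < ε)
    {f : ℝ → E} (hf : @Cadlag E (pseudoTop ζ) f) {ε : ℝ} (hε : 0 < ε) :
    ∃ j, ∃ δ > 0, ∀ t ∈ Icc (0:ℝ) 1, ∀ b, ζ j (f t) b < δ → e (f t) b < ε := by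
  classical
  obtain ⟨jc, δc, hδpos, hδ, F, hFne, hcov⟩ := sk_cadlag_cover hζ hopen hf (half_pos hε)
  obtain ⟨k, hk⟩ := sk_finset_dom hζdir (F.image jc)
  refine ⟨k, F.inf' hFne (fun p => δc p / 2), ?_, ?_⟩
  · show (0:ℝ) < _
    rw [Finset.lt_inf'_iff]
    exact fun p _ => half_pos (hδpos p)
  · intro t ht b hb
    obtain ⟨p, hpF, hpt⟩ := hcov t ht
    have h1 : e p (f t) < ε / 2 := hδ p (f t) (lt_trans hpt (half_lt_self (hδpos p)))
    have h2 : ζ (jc p) p b < δc p := by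
      have h3 : ζ (jc p) p b ≤ ζ (jc p) p (f t) + ζ (jc p) (f t) b := (hζ _).2.2 _ _ _
      have h4 : ζ (jc p) (f t) b ≤ ζ k (f t) b :=
        hk (jc p) (Finset.mem_image_of_mem jc hpF) _ _
      have h5 : ζ k (f t) b < δc p / 2 :=
        lt_of_lt_of_le hb (Finset.inf'_le _ hpF)
      linarith
    have h6 : e p b < ε / 2 := hδ p b h2
    have h7 : e (f t) b ≤ e (f t) p + e p b := he.2.2 _ _ _
    have h8 : e (f t) p = e p (f t) := he.2.1 _ _
    linarith

lemma sk_cadlag_bdd {E : Type*} {J : Type*} {ζ : J → E → E → ℝ}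
    (hζ : ∀ j, IsPseudometric (ζ j))
    {e : E → E → ℝ} (he : IsPseudometric e)
    (hopen : ∀ (p : E) (ε : ℝ), 0 < ε → ∃ j, ∃ δ > 0, ∀ b, ζ j p b < δ → e p b < ε)
    {f g : ℝ → E} (hf : @Cadlag E (pseudoTop ζ) f) (hg : @Cadlag E (pseudoTop ζ) g) :
    ∃ C, ∀ s ∈ Icc (0:ℝ) 1, ∀ t ∈ Icc (0:ℝ) 1, e (f s) (g t) ≤ C := by
  obtain ⟨jc, δc, hδpos, hδ, F, hFne, hcovF⟩ := sk_cadlag_cover hζ hopen hf one_pos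
  obtain ⟨jc', δc', hδpos', hδ', G, hGne, hcovG⟩ := sk_cadlag_cover hζ hopen hg one_pos
  refine ⟨(F.sup' hFne fun p => G.sup' hGne fun q => e p q) + 2, fun s hs t ht => ?_⟩
  obtain ⟨p, hpF, hps⟩ := hcovF s hs
  obtain ⟨q, hqG, hqt⟩ := hcovG t ht
  have h1 : e p (f s) < 1 := hδ p _ (lt_trans hps (half_lt_self (hδpos p)))
  have h2 : e q (g t) < 1 := hδ' q _ (lt_trans hqt (half_lt_self (hδpos' q)))
  have h3 : e p q ≤ F.sup' hFne fun p => G.sup' hGne fun q => e p q := by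
    refine le_trans (Finset.le_sup' (fun q => e p q) hqG) ?_
    exact Finset.le_sup' (fun p => G.sup' hGne fun q => e p q) hpF
  have h4 : e (f s) (g t) ≤ e (f s) p + e p (g t) := he.2.2 _ _ _
  have h5 : e p (g t) ≤ e p q + e q (g t) := he.2.2 _ _ _
  have h6 : e (f s) p = e p (f s) := he.2.1 _ _
  linarith

lemma sk_id_mem : (id : ℝ → ℝ) ∈ SkLambda :=
  ⟨continuousOn_id, fun a _ b _ h => h, image_id _⟩

lemma sk_mem_Icc {l : ℝ → ℝ} (hl : l ∈ SkLambda) {t : ℝ} (ht : t ∈ Icc (0:ℝ) 1) :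
    l t ∈ Icc (0:ℝ) 1 := hl.2.2 ▸ mem_image_of_mem l ht

lemma sk_endpoint_zero {g : ℝ → ℝ} (hm : StrictMonoOn g (Icc 0 1))
    (him : g '' (Icc 0 1) = Icc 0 1) : g 0 = 0 := by
  have h0 : (0:ℝ) ∈ Icc (0:ℝ) 1 := by norm_num
  have hg0 : g 0 ∈ Icc (0:ℝ) 1 := him ▸ mem_image_of_mem g h0
  have : (0:ℝ) ∈ g '' Icc (0:ℝ) 1 := by rw [him]; norm_num
  obtain ⟨c, hc, hgc⟩ := this
  have : g 0 ≤ g c := hm.monotoneOn h0 hc hc.1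
  exact le_antisymm (hgc ▸ this) hg0.1

lemma sk_endpoint_one {g : ℝ → ℝ} (hm : StrictMonoOn g (Icc 0 1))
    (him : g '' (Icc 0 1) = Icc 0 1) : g 1 = 1 := by
  have h1 : (1:ℝ) ∈ Icc (0:ℝ) 1 := by norm_num
  have hg1 : g 1 ∈ Icc (0:ℝ) 1 := him ▸ mem_image_of_mem g h1
  have : (1:ℝ) ∈ g '' Icc (0:ℝ) 1 := by rw [him]; norm_num
  obtain ⟨c, hc, hgc⟩ := this
  have : g c ≤ g 1 := hm.monotoneOn hc h1 hc.2
  exact le_antisymm hg1.2 (hgc ▸ this)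

lemma sk_mem_of_mono_image {g : ℝ → ℝ} (hm : StrictMonoOn g (Icc 0 1))
    (him : g '' (Icc 0 1) = Icc 0 1) : g ∈ SkLambda := by
  have g0 : g 0 = 0 := sk_endpoint_zero hm him
  have g1 : g 1 = 1 := sk_endpoint_one hm him
  have hmem : ∀ t ∈ Icc (0:ℝ) 1, g t ∈ Icc (0:ℝ) 1 := fun t ht =>
    him ▸ mem_image_of_mem g ht
  refine ⟨?_, hm, him⟩
  intro a ha
  have hleft : ContinuousWithinAt g (Icc (0:ℝ) 1 ∩ Iic a) a := by
    rcases eq_or_lt_of_le ha.1 with h0 | h0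
    · refine ContinuousWithinAt.mono continuousWithinAt_singleton ?_
      intro x hx
      have : x = a := le_antisymm hx.2 (h0 ▸ hx.1.1)
      simp [this]
    · have hga : 0 < g a := by
        have := hm (by norm_num : (0:ℝ) ∈ Icc (0:ℝ) 1) ha h0
        rwa [g0] at this
      refine ContinuousWithinAt.mono
        (hm.continuousWithinAt_left_of_exists_between
          (Icc_mem_nhdsLE_of_mem ⟨h0, ha.2⟩) ?_) inter_subset_right
      intro b hb
      have hb' : max b 0 ∈ Icc (0:ℝ) 1 := by
        constructor
        · exact le_max_right _ _
        · have : max b 0 < g a := max_lt hb hga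
          linarith [(hmem a ha).2]
      rw [← him] at hb'
      obtain ⟨c, hc, hgc⟩ := hb'
      exact ⟨c, hc, by rw [hgc]; exact ⟨le_max_left _ _, max_lt hb hga⟩⟩
  have hright : ContinuousWithinAt g (Icc (0:ℝ) 1 ∩ Ici a) a := by
    rcases eq_or_lt_of_le ha.2 with h1 | h1
    · refine ContinuousWithinAt.mono continuousWithinAt_singleton ?_
      intro x hx
      have : x = a := le_antisymm (h1 ▸ hx.1.2) hx.2
      simp [this]
    · have hga : g a < 1 := by
        have := hm ha (by norm_num : (1:ℝ) ∈ Icc (0:ℝ) 1) h1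
        rwa [g1] at this
      refine ContinuousWithinAt.mono
        (hm.continuousWithinAt_right_of_exists_between
          (Icc_mem_nhdsGE_of_mem ⟨ha.1, h1⟩) ?_) inter_subset_right
      intro b hb
      have hb' : min b 1 ∈ Icc (0:ℝ) 1 := by
        constructor
        · have : g a < min b 1 := lt_min hb hga
          linarith [(hmem a ha).1]
        · exact min_le_right _ _
      rw [← him] at hb'
      obtain ⟨c, hc, hgc⟩ := hb'
      exact ⟨c, hc, by rw [hgc]; exact ⟨lt_min hb hga, min_le_left _ _⟩⟩
  have := hleft.union hright
  refine this.mono ?_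
  intro x hx
  rcases le_total x a with h | h
  · exact Or.inl ⟨hx, h⟩
  · exact Or.inr ⟨hx, h⟩

lemma sk_comp_mem {l₁ l₂ : ℝ → ℝ} (h₁ : l₁ ∈ SkLambda) (h₂ : l₂ ∈ SkLambda) :
    l₁ ∘ l₂ ∈ SkLambda := by
  have hmt : MapsTo l₂ (Icc (0:ℝ) 1) (Icc (0:ℝ) 1) := fun t ht => sk_mem_Icc h₂ ht
  refine ⟨h₁.1.comp h₂.1 hmt, h₁.2.1.comp h₂.2.1 hmt, ?_⟩
  rw [image_comp, h₂.2.2, h₁.2.2]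

lemma sk_inv_mem {l : ℝ → ℝ} (hl : l ∈ SkLambda) :
    ∃ g ∈ SkLambda, (∀ t ∈ Icc (0:ℝ) 1, g t ∈ Icc (0:ℝ) 1 ∧ l (g t) = t) := by
  classical
  set g := Function.invFunOn l (Icc (0:ℝ) 1) with hg
  have hex : ∀ t ∈ Icc (0:ℝ) 1, ∃ a ∈ Icc (0:ℝ) 1, l a = t := by
    intro t ht
    rw [← hl.2.2] at ht
    obtain ⟨a, ha, hla⟩ := ht
    exact ⟨a, ha, hla⟩
  have hmemg : ∀ t ∈ Icc (0:ℝ) 1, g t ∈ Icc (0:ℝ) 1 := fun t ht =>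
    Function.invFunOn_mem (hex t ht)
  have hlg : ∀ t ∈ Icc (0:ℝ) 1, l (g t) = t := fun t ht =>
    Function.invFunOn_eq (hex t ht)
  have hgl : ∀ t ∈ Icc (0:ℝ) 1, g (l t) = t := by
    intro t ht
    have h1 : l (g (l t)) = l t := hlg (l t) (sk_mem_Icc hl ht)
    exact hl.2.1.injOn (hmemg (l t) (sk_mem_Icc hl ht)) ht h1
  have hmono : StrictMonoOn g (Icc (0:ℝ) 1) := by
    intro s hs t ht hst
    by_contra hcon
    push_neg at hcon
    have : l (g t) ≤ l (g s) :=
      hl.2.1.monotoneOn (hmemg t ht) (hmemg s hs) hcon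
    rw [hlg s hs, hlg t ht] at this
    linarith
  have him : g '' Icc (0:ℝ) 1 = Icc (0:ℝ) 1 := by
    apply Subset.antisymm
    · rintro x ⟨t, ht, rfl⟩
      exact hmemg t ht
    · intro a ha
      exact ⟨l a, sk_mem_Icc hl ha, hgl a ha⟩
  exact ⟨g, sk_mem_of_mono_image hmono him, fun t ht => ⟨hmemg t ht, hlg t ht⟩⟩

instance sk_nonempty_Icc : Nonempty (Set.Icc (0:ℝ) 1) := ⟨⟨0, by norm_num⟩⟩

lemma sk_bddAbove_abs {l : ℝ → ℝ} (hl : l ∈ SkLambda) :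
    BddAbove (range fun t : Set.Icc (0:ℝ) 1 => |l t - (t : ℝ)|) := by
  refine ⟨2, ?_⟩
  rintro r ⟨t, rfl⟩
  have h1 := sk_mem_Icc hl t.2
  have h2 := t.2
  simp only [mem_Icc] at h1 h2
  rw [abs_le]
  constructor <;> linarith [h1.1, h1.2, h2.1, h2.2]

lemma sk_bddBelow {E : Type*} (d : E → E → ℝ) (x y : ℝ → E) :
    BddBelow {r | ∃ l ∈ SkLambda,
      r = max (⨆ t : Set.Icc (0:ℝ) 1, |l t - (t : ℝ)|)
              (⨆ t : Set.Icc (0:ℝ) 1, d (x (l t)) (y t))} := by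
  refine ⟨0, ?_⟩
  rintro r ⟨l, hl, rfl⟩
  exact le_trans (Real.iSup_nonneg fun t => abs_nonneg _) (le_max_left _ _)

lemma sk_set_nonempty {E : Type*} (d : E → E → ℝ) (x y : ℝ → E) :
    Set.Nonempty {r | ∃ l ∈ SkLambda,
      r = max (⨆ t : Set.Icc (0:ℝ) 1, |l t - (t : ℝ)|)
              (⨆ t : Set.Icc (0:ℝ) 1, d (x (l t)) (y t))} :=
  ⟨_, id, sk_id_mem, rfl⟩

lemma skDist_le {E : Type*} (d : E → E → ℝ) (x y : ℝ → E) {l : ℝ → ℝ} (hl : l ∈ SkLambda) :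
    skDist d x y ≤ max (⨆ t : Set.Icc (0:ℝ) 1, |l t - (t : ℝ)|)
              (⨆ t : Set.Icc (0:ℝ) 1, d (x (l t)) (y t)) :=
  csInf_le (sk_bddBelow d x y) ⟨l, hl, rfl⟩

lemma skDist_nonneg {E : Type*} (d : E → E → ℝ) (x y : ℝ → E) : 0 ≤ skDist d x y :=
  Real.sInf_nonneg (by
    rintro r ⟨l, hl, rfl⟩
    exact le_trans (Real.iSup_nonneg fun t => abs_nonneg _) (le_max_left _ _))

lemma skDist_self {E : Type*} {e : E → E → ℝ} (he : IsPseudometric e) (x : ℝ → E) :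
    skDist e x x = 0 := by
  refine le_antisymm ?_ (skDist_nonneg e x x)
  have h := skDist_le e x x sk_id_mem
  simpa [he.1] using h

lemma skDist_exists_lt {E : Type*} {d : E → E → ℝ} {x y : ℝ → E} {c : ℝ}
    (h : skDist d x y < c) :
    ∃ l ∈ SkLambda, max (⨆ t : Set.Icc (0:ℝ) 1, |l t - (t : ℝ)|)
              (⨆ t : Set.Icc (0:ℝ) 1, d (x (l t)) (y t)) < c := by
  rw [skDist, csInf_lt_iff (sk_bddBelow d x y) (sk_set_nonempty d x y)] at h
  obtain ⟨r, ⟨l, hl, rfl⟩, hrc⟩ := h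
  exact ⟨l, hl, hrc⟩

lemma skDist_triangle {E : Type*} {e : E → E → ℝ} (he : IsPseudometric e) {u w v : ℝ → E}
    (huw : ∃ C, ∀ s ∈ Icc (0:ℝ) 1, ∀ t ∈ Icc (0:ℝ) 1, e (u s) (w t) ≤ C)
    (hwv : ∃ C, ∀ s ∈ Icc (0:ℝ) 1, ∀ t ∈ Icc (0:ℝ) 1, e (w s) (v t) ≤ C) :
    skDist e u v ≤ skDist e u w + skDist e w v := by
  obtain ⟨C₁, hC₁⟩ := huw
  obtain ⟨C₂, hC₂⟩ := hwv
  have key : ∀ r₁ ∈ {r | ∃ l ∈ SkLambda,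
      r = max (⨆ t : Set.Icc (0:ℝ) 1, |l t - (t : ℝ)|)
              (⨆ t : Set.Icc (0:ℝ) 1, e (u (l t)) (w t))},
      ∀ r₂ ∈ {r | ∃ l ∈ SkLambda,
      r = max (⨆ t : Set.Icc (0:ℝ) 1, |l t - (t : ℝ)|)
              (⨆ t : Set.Icc (0:ℝ) 1, e (w (l t)) (v t))},
      skDist e u v ≤ r₁ + r₂ := by
    rintro r₁ ⟨l₁, hl₁, rfl⟩ r₂ ⟨l₂, hl₂, rfl⟩
    have hcomp := sk_comp_mem hl₁ hl₂
    have hle := skDist_le e u v hcomp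
    have hbB₁ : BddAbove (range fun s : Set.Icc (0:ℝ) 1 => e (u (l₁ s)) (w s)) := by
      refine ⟨C₁, ?_⟩
      rintro r ⟨s, rfl⟩
      exact hC₁ _ (sk_mem_Icc hl₁ s.2) _ s.2
    have hbB₂ : BddAbove (range fun s : Set.Icc (0:ℝ) 1 => e (w (l₂ s)) (v s)) := by
      refine ⟨C₂, ?_⟩
      rintro r ⟨s, rfl⟩
      exact hC₂ _ (sk_mem_Icc hl₂ s.2) _ s.2
    have hA : (⨆ t : Set.Icc (0:ℝ) 1, |(l₁ ∘ l₂) t - (t : ℝ)|)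
        ≤ (⨆ t : Set.Icc (0:ℝ) 1, |l₁ t - (t : ℝ)|)
          + (⨆ t : Set.Icc (0:ℝ) 1, |l₂ t - (t : ℝ)|) := by
      refine ciSup_le fun t => ?_
      have h1 : |l₁ (l₂ t) - (l₂ t : ℝ)| ≤ ⨆ t : Set.Icc (0:ℝ) 1, |l₁ t - (t : ℝ)| :=
        le_ciSup (sk_bddAbove_abs hl₁) (⟨l₂ t, sk_mem_Icc hl₂ t.2⟩ : Set.Icc (0:ℝ) 1)
      have h2 : |l₂ t - (t : ℝ)| ≤ ⨆ t : Set.Icc (0:ℝ) 1, |l₂ t - (t : ℝ)| :=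
        le_ciSup (sk_bddAbove_abs hl₂) t
      calc |(l₁ ∘ l₂) t - (t : ℝ)| ≤ |l₁ (l₂ t) - (l₂ t : ℝ)| + |l₂ t - (t : ℝ)| :=
            abs_sub_le _ _ _
        _ ≤ _ := add_le_add h1 h2
    have hB : (⨆ t : Set.Icc (0:ℝ) 1, e (u ((l₁ ∘ l₂) t)) (v t))
        ≤ (⨆ t : Set.Icc (0:ℝ) 1, e (u (l₁ t)) (w t))
          + (⨆ t : Set.Icc (0:ℝ) 1, e (w (l₂ t)) (v t)) := by
      refine ciSup_le fun t => ?_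
      have h1 : e (u (l₁ (l₂ t))) (w (l₂ t)) ≤ ⨆ s : Set.Icc (0:ℝ) 1, e (u (l₁ s)) (w s) :=
        le_ciSup hbB₁ (⟨l₂ t, sk_mem_Icc hl₂ t.2⟩ : Set.Icc (0:ℝ) 1)
      have h2 : e (w (l₂ t)) (v t) ≤ ⨆ s : Set.Icc (0:ℝ) 1, e (w (l₂ s)) (v s) :=
        le_ciSup hbB₂ t
      calc e (u ((l₁ ∘ l₂) t)) (v t)
          ≤ e (u (l₁ (l₂ t))) (w (l₂ t)) + e (w (l₂ t)) (v t) := he.2.2 _ _ _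
        _ ≤ _ := add_le_add h1 h2
    refine le_trans hle (le_trans (max_le_max hA hB) ?_)
    apply max_le
    · exact add_le_add (le_max_left _ _) (le_max_left _ _)
    · exact add_le_add (le_max_right _ _) (le_max_right _ _)
  have h2 : skDist e u v - skDist e u w ≤ skDist e w v := by
    refine le_csInf (sk_set_nonempty e w v) fun r₂ hr₂ => ?_
    rw [sub_le_iff_le_add]
    have h1 : skDist e u v - r₂ ≤ skDist e u w := by
      refine le_csInf (sk_set_nonempty e u w) fun r₁ hr₁ => ?_
      have := key r₁ hr₁ r₂ hr₂
      linarith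
    linarith
  linarith


/-- Jakubowski's comparison theorem: if two separating directed families of pseudometrics
generate topologies `τ` (from `{d i}`) and `σ` (from `{ζ j}`) on `E` with `τ` coarser
than `σ`, then every `σ`-càdlàg function is `τ`-càdlàg, and on the space of `σ`-càdlàg
functions the topology generated by the Skorohod pseudometrics `ζ̃ j` is finer than the
one generated by the `d̃ i`. -/
theorem skorohod_topology_comparison {E : Type*} {I J : Type*}
    (d : I → E → E → ℝ) (ζ : J → E → E → ℝ)
    (hd : ∀ i, IsPseudometric (d i)) (hζ : ∀ j, IsPseudometric (ζ j))
    (hdsep : ∀ a b : E, a ≠ b → ∃ i, 0 < d i a b)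
    (hζsep : ∀ a b : E, a ≠ b → ∃ j, 0 < ζ j a b)
    (hddir : ∀ i i', ∃ k, ∀ a b, max (d i a b) (d i' a b) ≤ d k a b)
    (hζdir : ∀ j j', ∃ k, ∀ a b, max (ζ j a b) (ζ j' a b) ≤ ζ k a b)
    (hcoarse : ∀ s : Set E, IsOpen[pseudoTop d] s → IsOpen[pseudoTop ζ] s) :
    (∀ f : ℝ → E, @Cadlag E (pseudoTop ζ) f → @Cadlag E (pseudoTop d) f) ∧
    skTop {f : ℝ → E | @Cadlag E (pseudoTop ζ) f} ζ ≤
      skTop {f : ℝ → E | @Cadlag E (pseudoTop ζ) f} d := by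
  have hle : pseudoTop ζ ≤ pseudoTop d :=
    TopologicalSpace.le_def.mpr fun s => hcoarse s
  constructor
  · intro f hf
    exact ⟨fun t ht => (hf.1 t ht).mono_right (_root_.nhds_mono hle),
      fun t ht => (hf.2 t ht).imp fun L hL => hL.mono_right (_root_.nhds_mono hle)⟩
  by_cases hsub : ∀ a b : E, a = b
  · -- all topologies on the (subsingleton) space of càdlàg functions coincide
    have hall : ∀ (τ : TopologicalSpace {f : ℝ → E | @Cadlag E (pseudoTop ζ) f})
        (U : Set {f : ℝ → E | @Cadlag E (pseudoTop ζ) f}), IsOpen[τ] U := by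
      intro τ U
      rcases U.eq_empty_or_nonempty with h | ⟨z, hz⟩
      · rw [h]; exact @isOpen_empty _ τ
      · have hU2 : U = univ := eq_univ_of_forall fun w => by
          have hwz : w = z := Subtype.ext (funext fun r => hsub _ _)
          rw [hwz]; exact hz
        rw [hU2]; exact @isOpen_univ _ τ
    have heq : skTop {f : ℝ → E | @Cadlag E (pseudoTop ζ) f} ζ
        = skTop {f : ℝ → E | @Cadlag E (pseudoTop ζ) f} d :=
      TopologicalSpace.ext_iff.mpr fun U => ⟨fun _ => hall _ U, fun _ => hall _ U⟩
    exact le_of_eq heq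
  · push_neg at hsub
    obtain ⟨a₀, b₀, hab⟩ := hsub
    obtain ⟨j₀, -⟩ := hζsep a₀ b₀ hab
    haveI : Nonempty J := ⟨j₀⟩
    have hopen_d : ∀ (i : I) (p : E) (ε : ℝ), 0 < ε →
        ∃ j, ∃ δ > 0, ∀ b, ζ j p b < δ → d i p b < ε := by
      intro i p ε hε
      refine sk_nhds_ball hζ hζdir (hcoarse _ (sk_ball_open d i p ε)) ?_
      show d i p p < ε
      rw [(hd i).1]; exact hε
    have hopen_ζ : ∀ (j : J) (p : E) (ε : ℝ), 0 < ε →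
        ∃ j', ∃ δ > 0, ∀ b, ζ j' p b < δ → ζ j p b < ε := by
      intro j p ε hε
      refine sk_nhds_ball hζ hζdir (sk_ball_open ζ j p ε) ?_
      show ζ j p p < ε
      rw [(hζ j).1]; exact hε
    have hbd : ∀ (i : I) (u v : {f : ℝ → E | @Cadlag E (pseudoTop ζ) f}),
        ∃ C, ∀ s ∈ Icc (0:ℝ) 1, ∀ t ∈ Icc (0:ℝ) 1, d i ((u : ℝ → E) s) ((v : ℝ → E) t) ≤ C :=
      fun i u v => sk_cadlag_bdd hζ (hd i) (hopen_d i) u.2 v.2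
    have hbdζ : ∀ (j : J) (u v : {f : ℝ → E | @Cadlag E (pseudoTop ζ) f}),
        ∃ C, ∀ s ∈ Icc (0:ℝ) 1, ∀ t ∈ Icc (0:ℝ) 1, ζ j ((u : ℝ → E) s) ((v : ℝ → E) t) ≤ C :=
      fun j u v => sk_cadlag_bdd hζ (hζ j) (hopen_ζ j) u.2 v.2
    show skTop _ ζ ≤ ⨅ (k : I) (x : {f : ℝ → E | @Cadlag E (pseudoTop ζ) f}),
      TopologicalSpace.induced
        (fun y : {f : ℝ → E | @Cadlag E (pseudoTop ζ) f} =>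
          skDist (d k) (x : ℝ → E) (y : ℝ → E)) inferInstance
    refine le_iInf fun i => le_iInf fun x => ?_
    letI : TopologicalSpace {f : ℝ → E | @Cadlag E (pseudoTop ζ) f} :=
      skTop {f : ℝ → E | @Cadlag E (pseudoTop ζ) f} ζ
    have hcont : Continuous (fun y : {f : ℝ → E | @Cadlag E (pseudoTop ζ) f} =>
        skDist (d i) (x : ℝ → E) (y : ℝ → E)) := by
      rw [continuous_iff_continuousAt]
      intro y₀
      show Tendsto (fun y : {f : ℝ → E | @Cadlag E (pseudoTop ζ) f} =>
        skDist (d i) (x : ℝ → E) (y : ℝ → E)) (𝓝 y₀)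
        (𝓝 (skDist (d i) (x : ℝ → E) (y₀ : ℝ → E)))
      rw [Metric.tendsto_nhds]
      intro ε hε
      obtain ⟨j, δ₀, hδ₀, hU⟩ :=
        sk_cadlag_uniform hζ hζdir (hd i) (hopen_d i) y₀.2 (half_pos hε)
      set δ := min δ₀ (ε/2) with hδdef
      have hδpos : 0 < δ := lt_min hδ₀ (half_pos hε)
      have hball : {y : {f : ℝ → E | @Cadlag E (pseudoTop ζ) f} |
          skDist (ζ j) (y₀ : ℝ → E) (y : ℝ → E) < δ} ∈ 𝓝 y₀ := by
        have h1 : skTop {f : ℝ → E | @Cadlag E (pseudoTop ζ) f} ζ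
            ≤ TopologicalSpace.induced
              (fun y : {f : ℝ → E | @Cadlag E (pseudoTop ζ) f} =>
                skDist (ζ j) (y₀ : ℝ → E) (y : ℝ → E)) inferInstance :=
          iInf_le_of_le j (iInf_le _ y₀)
        have h2 := _root_.nhds_mono (a := y₀) h1
        rw [nhds_induced] at h2
        refine h2 ?_
        refine mem_comap.2 ⟨Iio δ, ?_, fun z hz => hz⟩
        rw [skDist_self (hζ j)]
        exact Iio_mem_nhds hδpos
      refine mem_of_superset hball ?_
      intro y hy
      simp only [mem_setOf_eq] at hy ⊢
      obtain ⟨l, hl, hml⟩ := skDist_exists_lt hy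
      have hA : (⨆ t : Set.Icc (0:ℝ) 1, |l t - (t : ℝ)|) < δ :=
        lt_of_le_of_lt (le_max_left _ _) hml
      have hB : (⨆ t : Set.Icc (0:ℝ) 1, ζ j ((y₀ : ℝ → E) (l t)) ((y : ℝ → E) t)) < δ :=
        lt_of_le_of_lt (le_max_right _ _) hml
      have hbB : BddAbove (range fun t : Set.Icc (0:ℝ) 1 =>
          ζ j ((y₀ : ℝ → E) (l t)) ((y : ℝ → E) t)) := by
        obtain ⟨C, hC⟩ := hbdζ j y₀ y
        exact ⟨C, by rintro r ⟨t, rfl⟩; exact hC _ (sk_mem_Icc hl t.2) _ t.2⟩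
      have hBpt : ∀ t : Set.Icc (0:ℝ) 1, ζ j ((y₀ : ℝ → E) (l t)) ((y : ℝ → E) t) < δ :=
        fun t => lt_of_le_of_lt (le_ciSup hbB t) hB
      have h1 : skDist (d i) (y₀ : ℝ → E) (y : ℝ → E) ≤ ε/2 := by
        refine le_trans (skDist_le (d i) _ _ hl) (max_le ?_ ?_)
        · exact le_trans hA.le (min_le_right _ _)
        · refine ciSup_le fun t => ?_
          exact (hU (l t) (sk_mem_Icc hl t.2) _
            (lt_of_lt_of_le (hBpt t) (min_le_left _ _))).le
      obtain ⟨g, hg, hginv⟩ := sk_inv_mem hl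
      have h2 : skDist (d i) (y : ℝ → E) (y₀ : ℝ → E) ≤ ε/2 := by
        refine le_trans (skDist_le (d i) _ _ hg) (max_le ?_ ?_)
        · refine ciSup_le fun t => ?_
          obtain ⟨hgmem, hlg⟩ := hginv t t.2
          have e1 : |g t - (t : ℝ)| = |l (g t) - (g t : ℝ)| := by
            rw [hlg]; exact abs_sub_comm _ _
          have hle2 : |l (g t) - (g t : ℝ)| ≤ ⨆ s : Set.Icc (0:ℝ) 1, |l s - (s : ℝ)| :=
            le_ciSup (sk_bddAbove_abs hl) (⟨g t, hgmem⟩ : Set.Icc (0:ℝ) 1)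
          rw [e1]
          exact le_trans hle2 (le_trans hA.le (min_le_right _ _))
        · refine ciSup_le fun t => ?_
          obtain ⟨hgmem, hlg⟩ := hginv t t.2
          have hz : ζ j ((y₀ : ℝ → E) (l (g t))) ((y : ℝ → E) (g t)) < δ :=
            hBpt (⟨g t, hgmem⟩ : Set.Icc (0:ℝ) 1)
          have hd2 : d i ((y₀ : ℝ → E) (l (g t))) ((y : ℝ → E) (g t)) < ε/2 :=
            hU (l (g t)) (sk_mem_Icc hl hgmem) _ (lt_of_lt_of_le hz (min_le_left _ _))
          have e2 : (y₀ : ℝ → E) (t : ℝ) = (y₀ : ℝ → E) (l (g t)) := by rw [hlg]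
          rw [(hd i).2.1, e2]
          exact hd2.le
      have t1 : skDist (d i) (x : ℝ → E) (y : ℝ → E)
          ≤ skDist (d i) (x : ℝ → E) (y₀ : ℝ → E) + skDist (d i) (y₀ : ℝ → E) (y : ℝ → E) :=
        skDist_triangle (hd i) (hbd i x y₀) (hbd i y₀ y)
      have t2 : skDist (d i) (x : ℝ → E) (y₀ : ℝ → E)
          ≤ skDist (d i) (x : ℝ → E) (y : ℝ → E) + skDist (d i) (y : ℝ → E) (y₀ : ℝ → E) :=
        skDist_triangle (hd i) (hbd i x y) (hbd i y y₀)
      rw [Real.dist_eq, abs_sub_lt_iff]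
      constructor <;>
        linarith [skDist_nonneg (d i) (y₀ : ℝ → E) (y : ℝ → E),
          skDist_nonneg (d i) (y : ℝ → E) (y₀ : ℝ → E)]
    exact continuous_iff_le_induced.mp hcont
end

section
/- Let E be a completely regular space whose topology is generated by two families of pseudometrics {d_i}_{i∈I} and {ζ_j}_{j∈J}, each separating points and directed under pointwise maxima. Then the families of Skorohod pseudometrics {d̃_i}_{i∈I} and {ζ̃_j}_{j∈J} generate the same topology on the space D([0,1],E) of càdlàg functions into E. In other words, the Skorohod topology on D([0,1],E) depends only on the topology of E, not on the choice of defining pseudometrics. -/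
open Set Filter Topology

namespace SkAux

/-! ### Pseudometric basics -/

theorem pm_nonneg {E : Type*} {ρ : E → E → ℝ} (h : IsPseudometric ρ) (a b : E) : 0 ≤ ρ a b := by
  have h1 := h.2.2 a b a
  rw [h.1 a, h.2.1 b a] at h1
  linarith

theorem pm_abs {E : Type*} {ρ : E → E → ℝ} (h : IsPseudometric ρ) (c a x : E) :
    |ρ c x - ρ c a| ≤ ρ a x := by
  rw [abs_sub_le_iff]
  refine ⟨by have := h.2.2 c a x; linarith, ?_⟩
  have h1 := h.2.2 c x a
  rw [h.2.1 x a] at h1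
  linarith

/-! ### Time changes -/

theorem id_mem : (fun t : ℝ => t) ∈ SkLambda :=
  ⟨continuousOn_id, fun _ _ _ _ h => h, image_id _⟩

theorem skl_maps {l : ℝ → ℝ} (hl : l ∈ SkLambda) {t : ℝ} (ht : t ∈ Icc (0:ℝ) 1) :
    l t ∈ Icc (0:ℝ) 1 :=
  hl.2.2 ▸ mem_image_of_mem l ht

theorem comp_mem {l₁ l₂ : ℝ → ℝ} (h₁ : l₁ ∈ SkLambda) (h₂ : l₂ ∈ SkLambda) :
    (fun t => l₁ (l₂ t)) ∈ SkLambda := by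
  obtain ⟨c₁, m₁, i₁⟩ := h₁
  obtain ⟨c₂, m₂, i₂⟩ := h₂
  have hmaps : MapsTo l₂ (Icc 0 1) (Icc 0 1) := fun t ht => i₂ ▸ mem_image_of_mem l₂ ht
  refine ⟨ContinuousOn.comp c₁ c₂ hmaps, StrictMonoOn.comp m₁ m₂ hmaps, ?_⟩
  have : (fun t => l₁ (l₂ t)) '' Icc 0 1 = l₁ '' (l₂ '' Icc 0 1) := by
    rw [← image_comp]; rfl
  rw [this, i₂, i₁]

theorem exists_inv {l : ℝ → ℝ} (hl : l ∈ SkLambda) :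
    ∃ g ∈ SkLambda, (∀ t ∈ Icc (0:ℝ) 1, l (g t) = t) ∧ (∀ t ∈ Icc (0:ℝ) 1, g (l t) = t) := by
  obtain ⟨hc, hm, hi⟩ := hl
  have hmaps : ∀ t ∈ Icc (0:ℝ) 1, l t ∈ Icc (0:ℝ) 1 := fun t ht => hi ▸ mem_image_of_mem l ht
  set φ : Icc (0:ℝ) 1 → Icc (0:ℝ) 1 := fun t => ⟨l t, hmaps t t.2⟩ with hφ
  have hφm : StrictMono φ := by
    intro a b hab
    exact Subtype.mk_lt_mk.2 (hm a.2 b.2 (Subtype.coe_lt_coe.2 hab))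
  have hφs : Function.Surjective φ := by
    intro b
    have hb : (b:ℝ) ∈ l '' Icc 0 1 := by rw [hi]; exact b.2
    obtain ⟨a, ha, hab⟩ := hb
    exact ⟨⟨a, ha⟩, Subtype.ext hab⟩
  set e := StrictMono.orderIsoOfSurjective φ hφm hφs with he
  have heφ : ∀ z, e z = φ z := fun z => rfl
  set g : ℝ → ℝ := fun s => if h : s ∈ Icc (0:ℝ) 1 then ((e.symm ⟨s, h⟩ : Icc (0:ℝ) 1) : ℝ) else s
    with hg
  have hgmem : ∀ t (ht : t ∈ Icc (0:ℝ) 1), g t = ((e.symm ⟨t, ht⟩ : Icc (0:ℝ) 1) : ℝ) := by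
    intro t ht; simp only [hg, dif_pos ht]
  have hlg : ∀ t ∈ Icc (0:ℝ) 1, l (g t) = t := by
    intro t ht
    rw [hgmem t ht]
    have h1 : φ (e.symm ⟨t, ht⟩) = e (e.symm ⟨t, ht⟩) := (heφ _).symm
    have h2 : l ((e.symm ⟨t, ht⟩ : Icc (0:ℝ) 1) : ℝ) = ((e (e.symm ⟨t, ht⟩) : Icc (0:ℝ) 1) : ℝ) := by
      rw [← h1]
    rw [h2, OrderIso.apply_symm_apply]
  have hgl : ∀ t ∈ Icc (0:ℝ) 1, g (l t) = t := by
    intro t ht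
    rw [hgmem (l t) (hmaps t ht)]
    have h1 : (⟨l t, hmaps t ht⟩ : Icc (0:ℝ) 1) = e ⟨t, ht⟩ := by
      rw [heφ]
    rw [h1, OrderIso.symm_apply_apply]
  refine ⟨g, ⟨?_, ?_, ?_⟩, hlg, hgl⟩
  · rw [continuousOn_iff_continuous_restrict]
    have hres : (Icc (0:ℝ) 1).domRestrict g = fun p : Icc (0:ℝ) 1 => ((e.symm p : Icc (0:ℝ) 1) : ℝ) := by
      funext p
      simp only [domRestrict_apply]
      rw [hgmem p p.2]
    rw [hres]
    exact continuous_subtype_val.comp e.toHomeomorph.symm.continuous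
  · intro a ha b hb hab
    rw [hgmem a ha, hgmem b hb]
    exact Subtype.coe_lt_coe.2 (e.symm.strictMono (Subtype.mk_lt_mk.2 hab))
  · apply Subset.antisymm
    · rintro s ⟨a, ha, rfl⟩
      rw [hgmem a ha]
      exact (e.symm ⟨a, ha⟩).2
    · intro b hb
      refine ⟨(e ⟨b, hb⟩ : Icc (0:ℝ) 1), (e ⟨b, hb⟩).2, ?_⟩
      rw [hgmem _ (e ⟨b, hb⟩).2]
      rw [show (⟨((e ⟨b, hb⟩ : Icc (0:ℝ) 1) : ℝ), (e ⟨b, hb⟩).2⟩ : Icc (0:ℝ) 1) = e ⟨b, hb⟩ from rfl]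
      rw [OrderIso.symm_apply_apply]

/-! ### Basic properties of `skDist` -/

instance : Nonempty ↥(Icc (0:ℝ) 1) := ⟨⟨0, by norm_num⟩⟩

variable {E : Type*}

def skSet (ρ : E → E → ℝ) (x y : ℝ → E) : Set ℝ :=
  {r | ∃ l ∈ SkLambda,
    r = max (⨆ t : Set.Icc (0:ℝ) 1, |l t - (t : ℝ)|)
            (⨆ t : Set.Icc (0:ℝ) 1, ρ (x (l t)) (y t))}

theorem skDist_eq {ρ : E → E → ℝ} {x y : ℝ → E} : skDist ρ x y = sInf (skSet ρ x y) := rfl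

theorem skSet_nonneg {ρ : E → E → ℝ} {x y : ℝ → E} {r : ℝ} (hr : r ∈ skSet ρ x y) : 0 ≤ r := by
  obtain ⟨l, _, rfl⟩ := hr
  exact le_trans (Real.iSup_nonneg fun t => abs_nonneg _) (le_max_left _ _)

theorem skSet_nonempty {ρ : E → E → ℝ} {x y : ℝ → E} : (skSet ρ x y).Nonempty :=
  ⟨_, (fun t : ℝ => t), id_mem, rfl⟩

theorem skSet_bddBelow {ρ : E → E → ℝ} {x y : ℝ → E} : BddBelow (skSet ρ x y) :=
  ⟨0, fun _ hr => skSet_nonneg hr⟩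

theorem skDist_nonneg {ρ : E → E → ℝ} {x y : ℝ → E} : 0 ≤ skDist ρ x y :=
  le_csInf skSet_nonempty fun _ hr => skSet_nonneg hr

theorem skDist_self {ρ : E → E → ℝ} (h0 : ∀ a, ρ a a = 0) (y : ℝ → E) : skDist ρ y y = 0 := by
  refine le_antisymm ?_ skDist_nonneg
  rw [skDist_eq]
  refine csInf_le skSet_bddBelow ⟨(fun t : ℝ => t), id_mem, ?_⟩
  have e1 : (fun t : Icc (0:ℝ) 1 => |(t:ℝ) - (t:ℝ)|) = fun _ => (0:ℝ) := by
    funext t; simp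
  have e2 : (fun t : Icc (0:ℝ) 1 => ρ (y (t:ℝ)) (y (t:ℝ))) = fun _ => (0:ℝ) := by
    funext t; simp [h0]
  simp only [e1, e2, ciSup_const, max_self]

theorem skDist_le {ρ : E → E → ℝ} {x y : ℝ → E} {l : ℝ → ℝ} (hl : l ∈ SkLambda) {b : ℝ}
    (h1 : ∀ t : Icc (0:ℝ) 1, |l t - (t:ℝ)| ≤ b)
    (h2 : ∀ t : Icc (0:ℝ) 1, ρ (x (l t)) (y t) ≤ b) :
    skDist ρ x y ≤ b := by
  rw [skDist_eq]
  exact le_trans (csInf_le skSet_bddBelow ⟨l, hl, rfl⟩) (max_le (ciSup_le h1) (ciSup_le h2))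

theorem exists_witness {ρ : E → E → ℝ} {x y : ℝ → E} {δ : ℝ} (h : skDist ρ x y < δ) :
    ∃ l ∈ SkLambda, (⨆ t : Icc (0:ℝ) 1, |l t - (t:ℝ)|) < δ ∧
      (⨆ t : Icc (0:ℝ) 1, ρ (x (l t)) (y t)) < δ := by
  rw [skDist_eq] at h
  obtain ⟨r, ⟨l, hl, rfl⟩, hrδ⟩ := exists_lt_of_csInf_lt skSet_nonempty h
  exact ⟨l, hl, lt_of_le_of_lt (le_max_left _ _) hrδ, lt_of_le_of_lt (le_max_right _ _) hrδ⟩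

theorem bdd1 {l : ℝ → ℝ} (hl : l ∈ SkLambda) :
    BddAbove (range fun t : Icc (0:ℝ) 1 => |l t - (t:ℝ)|) := by
  refine ⟨1, ?_⟩
  rintro r ⟨t, rfl⟩
  have h1 := skl_maps hl t.2
  have h2 := t.2
  rw [abs_sub_le_iff]
  exact ⟨by linarith [h1.1, h1.2, h2.1, h2.2], by linarith [h1.1, h1.2, h2.1, h2.2]⟩

/-! ### Compactness of the càdlàg hull -/

theorem cadlag_compact [TopologicalSpace E] [RegularSpace E] {f : ℝ → E} (hf : Cadlag f) :
    ∃ S : Set E, IsCompact S ∧ f '' Icc 0 1 ⊆ S := by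
  classical
  set S : Set E := f '' Icc 0 1 ∪ {L | ∃ u ∈ Ioc (0:ℝ) 1, Tendsto f (𝓝[<] u) (𝓝 L)} with hSdef
  refine ⟨S, ?_, subset_union_left⟩
  refine isCompact_of_finite_subcover ?_
  intro ι U hUo hcov
  set K : ℝ → Set E := fun t =>
    f '' Icc 0 t ∪ {L | ∃ u ∈ Ioc (0:ℝ) t, Tendsto f (𝓝[<] u) (𝓝 L)} with hKdef
  set A : Set ℝ := {t | t ∈ Icc (0:ℝ) 1 ∧ ∃ F : Finset ι, K t ⊆ ⋃ i ∈ F, U i} with hAdef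
  have hfS : ∀ t ∈ Icc (0:ℝ) 1, f t ∈ S := fun t ht => mem_union_left _ ⟨t, ht, rfl⟩
  obtain ⟨i₀, hi₀⟩ := mem_iUnion.1 (hcov (hfS 0 ⟨le_refl 0, zero_le_one⟩))
  have h0A : (0:ℝ) ∈ A := by
    refine ⟨⟨le_refl 0, zero_le_one⟩, {i₀}, ?_⟩
    rintro a (⟨u, hu, rfl⟩ | ⟨u, hu, _⟩)
    · have : u = 0 := le_antisymm hu.2 hu.1
      subst this
      simp only [mem_iUnion, Finset.mem_singleton, exists_prop]
      exact ⟨i₀, rfl, hi₀⟩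
    · exact absurd hu.2 (not_le.2 hu.1)
  have hAne : A.Nonempty := ⟨0, h0A⟩
  have hAbdd : BddAbove A := ⟨1, fun t ht => ht.1.2⟩
  set s := sSup A with hs
  have hs0 : 0 ≤ s := le_csSup hAbdd h0A
  have hs1 : s ≤ 1 := csSup_le hAne fun t ht => ht.1.2
  have hsA : s ∈ A := by
    rcases eq_or_lt_of_le hs0 with h | h
    · exact h ▸ h0A
    · obtain ⟨L, hL⟩ := hf.2 s ⟨h, hs1⟩
      have hLS : L ∈ S := mem_union_right _ ⟨s, ⟨h, hs1⟩, hL⟩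
      obtain ⟨i₁, hi₁⟩ := mem_iUnion.1 (hcov hLS)
      obtain ⟨V, hVn, hVc, hVU⟩ := exists_mem_nhds_isClosed_subset ((hUo i₁).mem_nhds hi₁)
      obtain ⟨c, hcs, hcsub⟩ := mem_nhdsLT_iff_exists_Ioo_subset.1 (hL hVn)
      have hcs' : max c 0 < s := max_lt hcs h
      obtain ⟨t₀, ht₀A, ht₀⟩ := exists_lt_of_lt_csSup hAne hcs'
      obtain ⟨F, hF⟩ := ht₀A.2
      obtain ⟨i₂, hi₂⟩ := mem_iUnion.1 (hcov (hfS s ⟨hs0, hs1⟩))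
      refine ⟨⟨hs0, hs1⟩, insert i₁ (insert i₂ F), ?_⟩
      have hbig : ∀ {a : E}, a ∈ ⋃ i ∈ F, U i → a ∈ ⋃ i ∈ insert i₁ (insert i₂ F), U i := by
        intro a ha
        simp only [mem_iUnion, exists_prop] at ha ⊢
        obtain ⟨i, hi, hai⟩ := ha
        exact ⟨i, Finset.mem_insert_of_mem (Finset.mem_insert_of_mem hi), hai⟩
      have hmem1 : ∀ {a : E}, a ∈ U i₁ → a ∈ ⋃ i ∈ insert i₁ (insert i₂ F), U i := by
        intro a ha
        simp only [mem_iUnion, exists_prop]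
        exact ⟨i₁, Finset.mem_insert_self _ _, ha⟩
      have hmem2 : ∀ {a : E}, a ∈ U i₂ → a ∈ ⋃ i ∈ insert i₁ (insert i₂ F), U i := by
        intro a ha
        simp only [mem_iUnion, exists_prop]
        exact ⟨i₂, Finset.mem_insert_of_mem (Finset.mem_insert_self _ _), ha⟩
      rintro a (⟨u, hu, rfl⟩ | ⟨u, hu, hTu⟩)
      · by_cases hut : u ≤ t₀
        · exact hbig (hF (mem_union_left _ ⟨u, ⟨hu.1, hut⟩, rfl⟩))
        · push_neg at hut
          rcases eq_or_lt_of_le hu.2 with hus | hus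
          · rw [hus]; exact hmem2 hi₂
          · refine hmem1 (hVU (hcsub ⟨?_, hus⟩))
            calc c ≤ max c 0 := le_max_left _ _
            _ < t₀ := ht₀
            _ < u := hut
      · by_cases hut : u ≤ t₀
        · exact hbig (hF (mem_union_right _ ⟨u, ⟨hu.1, hut⟩, hTu⟩))
        · push_neg at hut
          have hmcu : max c 0 < u := lt_trans ht₀ hut
          have hnb : ∀ᶠ r in 𝓝[<] u, f r ∈ V := by
            filter_upwards [Ioo_mem_nhdsLT hmcu] with r hr
            exact hcsub ⟨lt_of_le_of_lt (le_max_left _ _) hr.1, lt_of_lt_of_le hr.2 hu.2⟩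
          exact hmem1 (hVU (hVc.mem_of_tendsto hTu hnb))
  have hseq : s = 1 := by
    by_contra hne
    have hlt : s < 1 := lt_of_le_of_ne hs1 hne
    have hrc := hf.1 s ⟨hs0, hlt⟩
    obtain ⟨i₃, hi₃⟩ := mem_iUnion.1 (hcov (hfS s ⟨hs0, hs1⟩))
    obtain ⟨V, hVn, hVc, hVU⟩ := exists_mem_nhds_isClosed_subset ((hUo i₃).mem_nhds hi₃)
    obtain ⟨e, hes, hesub⟩ := mem_nhdsGT_iff_exists_Ioo_subset.1 (hrc hVn)
    set t' := min ((s+e)/2) 1 with ht'def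
    have hse : s < e := hes
    have hst' : s < t' := lt_min (by linarith) hlt
    have ht'e : t' < e := lt_of_le_of_lt (min_le_left _ _) (by linarith)
    have ht'1 : t' ≤ 1 := min_le_right _ _
    obtain ⟨F, hF⟩ := hsA.2
    have ht'A : t' ∈ A := by
      refine ⟨⟨le_trans hs0 hst'.le, ht'1⟩, insert i₃ F, ?_⟩
      have hbig : ∀ {a : E}, a ∈ ⋃ i ∈ F, U i → a ∈ ⋃ i ∈ insert i₃ F, U i := by
        intro a ha
        simp only [mem_iUnion, exists_prop] at ha ⊢
        obtain ⟨i, hi, hai⟩ := ha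
        exact ⟨i, Finset.mem_insert_of_mem hi, hai⟩
      have hmem3 : ∀ {a : E}, a ∈ U i₃ → a ∈ ⋃ i ∈ insert i₃ F, U i := by
        intro a ha
        simp only [mem_iUnion, exists_prop]
        exact ⟨i₃, Finset.mem_insert_self _ _, ha⟩
      rintro a (⟨u, hu, rfl⟩ | ⟨u, hu, hTu⟩)
      · by_cases hus : u ≤ s
        · exact hbig (hF (mem_union_left _ ⟨u, ⟨hu.1, hus⟩, rfl⟩))
        · push_neg at hus
          exact hmem3 (hVU (hesub ⟨hus, lt_of_le_of_lt hu.2 ht'e⟩))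
      · by_cases hus : u ≤ s
        · exact hbig (hF (mem_union_right _ ⟨u, ⟨hu.1, hus⟩, hTu⟩))
        · push_neg at hus
          have hnb : ∀ᶠ r in 𝓝[<] u, f r ∈ V := by
            filter_upwards [Ioo_mem_nhdsLT hus] with r hr
            exact hesub ⟨hr.1, lt_of_lt_of_le hr.2 (le_of_lt (lt_of_le_of_lt hu.2 ht'e))⟩
          exact hmem3 (hVU (hVc.mem_of_tendsto hTu hnb))
    exact absurd (le_csSup hAbdd ht'A) (not_le.2 hst')
  obtain ⟨_, F, hF⟩ := hsA
  rw [hseq] at hF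
  exact ⟨F, hF⟩

/-! ### Neighborhoods for pseudometric topologies -/

theorem continuous_of_pseudoTop {ι : Type*} [t : TopologicalSpace E]
    {d : ι → E → E → ℝ} (ht : t = pseudoTop d) (i : ι) (a : E) :
    Continuous fun x => d i a x := by
  rw [continuous_iff_le_induced, ht]
  exact le_trans (iInf_le _ i) (iInf_le _ a)

theorem finset_dir {J : Type*} [Nonempty J] {ζ : J → E → E → ℝ}
    (hdir : ∀ j j', ∃ k, ∀ a b, max (ζ j a b) (ζ j' a b) ≤ ζ k a b) (G : Finset J) :
    ∃ k, ∀ j ∈ G, ∀ a b, ζ j a b ≤ ζ k a b := by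
  classical
  induction G using Finset.induction with
  | empty => exact ⟨Classical.arbitrary J, by simp⟩
  | @insert j G hjG ih =>
    obtain ⟨k, hk⟩ := ih
    obtain ⟨k', hk'⟩ := hdir j k
    refine ⟨k', fun j' hj' a b => ?_⟩
    rcases Finset.mem_insert.1 hj' with rfl | hj'
    · exact le_trans (le_max_left _ _) (hk' a b)
    · exact le_trans (le_trans (hk j' hj' a b) (le_max_right (ζ j a b) _)) (hk' a b)

theorem exists_ball_subset {J : Type*} [Nonempty J] [t : TopologicalSpace E]
    {ζ : J → E → E → ℝ} (hζ : ∀ j, IsPseudometric (ζ j))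
    (hdir : ∀ j j', ∃ k, ∀ a b, max (ζ j a b) (ζ j' a b) ≤ ζ k a b)
    (ht : t = pseudoTop ζ) {a : E} {W : Set E} (hW : W ∈ 𝓝 a) :
    ∃ k, ∃ δ > 0, ∀ x, ζ k a x < δ → x ∈ W := by
  classical
  have ht2 : t = ⨅ p : J × E, TopologicalSpace.induced (fun x => ζ p.1 p.2 x) inferInstance := by
    rw [ht]
    exact (iInf_prod (f := fun p : J × E =>
      TopologicalSpace.induced (fun x => ζ p.1 p.2 x) inferInstance)).symm
  have hnh : (𝓝 a : Filter E) =
      ⨅ p : J × E, comap (fun x => ζ p.1 p.2 x) (𝓝 (ζ p.1 p.2 a)) := by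
    rw [ht2, _root_.nhds_iInf]
    exact iInf_congr fun p => nhds_induced _ _
  rw [hnh, Filter.mem_iInf] at hW
  obtain ⟨Ps, hPfin, V, hV, hWeq⟩ := hW
  have hVball : ∀ p : Ps, ∃ δ > 0, ∀ x, ζ (p : J × E).1 a x < δ → x ∈ V p := by
    intro p
    obtain ⟨sV, hsV, hsub⟩ := Filter.mem_comap.1 (hV p)
    obtain ⟨δ, hδ, hball⟩ := Metric.mem_nhds_iff.1 hsV
    refine ⟨δ, hδ, fun x hx => hsub ?_⟩
    apply hball
    rw [Metric.mem_ball, Real.dist_eq]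
    exact lt_of_le_of_lt (pm_abs (hζ _) _ _ _) hx
  choose δf hδf hδball using hVball
  haveI : Finite ↥Ps := hPfin
  haveI : Fintype ↥Ps := Fintype.ofFinite _
  set G : Finset J := hPfin.toFinset.image Prod.fst with hGdef
  obtain ⟨k, hk⟩ := finset_dir hdir G
  rcases isEmpty_or_nonempty ↥Ps with hemp | hne
  · refine ⟨k, 1, one_pos, fun x _ => ?_⟩
    rw [hWeq]
    exact mem_iInter.2 fun p => (hemp.elim p)
  · set δ := Finset.univ.inf' Finset.univ_nonempty δf with hδdef
    have hδpos : 0 < δ := by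
      rw [hδdef, Finset.lt_inf'_iff]
      exact fun p _ => hδf p
    refine ⟨k, δ, hδpos, fun x hx => ?_⟩
    rw [hWeq]
    refine mem_iInter.2 fun p => ?_
    have hpG : (p : J × E).1 ∈ G := by
      rw [hGdef]
      exact Finset.mem_image.2 ⟨p, hPfin.mem_toFinset.2 p.2, rfl⟩
    have hle1 : ζ (p : J × E).1 a x ≤ ζ k a x := hk _ hpG a x
    have hle2 : δ ≤ δf p := Finset.inf'_le _ (Finset.mem_univ p)
    exact hδball p x (by linarith)

/-! ### Uniform comparison on compact sets -/

theorem unif_comp {J : Type*} [Nonempty J] [t : TopologicalSpace E]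
    {ζ : J → E → E → ℝ} (hζ : ∀ j, IsPseudometric (ζ j))
    (hdir : ∀ j j', ∃ k, ∀ a b, max (ζ j a b) (ζ j' a b) ≤ ζ k a b)
    (htζ : t = pseudoTop ζ)
    {ρ : E → E → ℝ} (hρ : IsPseudometric ρ) (hρc : ∀ a, Continuous fun x => ρ a x)
    {S : Set E} (hS : IsCompact S) {ε : ℝ} (hε : 0 < ε) :
    ∃ k, ∃ δ > 0, ∀ a ∈ S, ∀ x, ζ k a x < δ → ρ a x < ε := by
  classical
  have key : ∀ a : E, ∃ k, ∃ δ > 0, ∀ x, ζ k a x < δ → ρ a x < ε/2 := by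
    intro a
    have hopen : IsOpen {x | ρ a x < ε/2} := by
      have h : {x | ρ a x < ε/2} = (fun x => ρ a x) ⁻¹' Iio (ε/2) := rfl
      rw [h]
      exact IsOpen.preimage (hρc a) isOpen_Iio
    have hmem : {x | ρ a x < ε/2} ∈ 𝓝 a :=
      hopen.mem_nhds (by simp only [mem_setOf_eq, hρ.1 a]; linarith)
    exact exists_ball_subset hζ hdir htζ hmem
  choose k0 δ0 hδ0 hb using key
  have hcov : S ⊆ ⋃ a : ↥S, {x | ζ (k0 ↑a) ↑a x < δ0 ↑a / 2} := by
    intro a ha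
    refine mem_iUnion.2 ⟨⟨a, ha⟩, ?_⟩
    simp only [mem_setOf_eq, (hζ (k0 a)).1 a]
    linarith [hδ0 a]
  have hopen2 : ∀ a : ↥S, IsOpen {x | ζ (k0 ↑a) ↑a x < δ0 ↑a / 2} := by
    intro a
    have h : {x | ζ (k0 ↑a) ↑a x < δ0 ↑a / 2} = (fun x => ζ (k0 ↑a) ↑a x) ⁻¹' Iio (δ0 ↑a / 2) := rfl
    rw [h]
    exact IsOpen.preimage (continuous_of_pseudoTop htζ _ _) isOpen_Iio
  obtain ⟨G, hG⟩ := hS.elim_finite_subcover _ hopen2 hcov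
  rcases G.eq_empty_or_nonempty with rfl | hGne
  · refine ⟨Classical.arbitrary J, 1, one_pos, fun a ha x _ => absurd (hG ha) ?_⟩
    simp
  · obtain ⟨k, hk⟩ := finset_dir hdir (G.image fun a : ↥S => k0 ↑a)
    set δ := G.inf' hGne (fun a => δ0 ↑a / 2) with hδdef
    have hδpos : 0 < δ := by
      rw [hδdef, Finset.lt_inf'_iff]
      intro a _
      linarith [hδ0 (↑a : E)]
    refine ⟨k, δ, hδpos, fun a ha x hx => ?_⟩
    have hmem := hG ha
    simp only [mem_iUnion, exists_prop, mem_setOf_eq] at hmem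
    obtain ⟨b, hbG, hba⟩ := hmem
    have hdom : ∀ u v, ζ (k0 ↑b) u v ≤ ζ k u v :=
      hk _ (Finset.mem_image.2 ⟨b, hbG, rfl⟩)
    have h3 : δ ≤ δ0 ↑b / 2 := Finset.inf'_le _ hbG
    have h1 : ζ (k0 ↑b) ↑b x < δ0 ↑b := by
      have htri := (hζ (k0 ↑b)).2.2 ↑b a x
      have h2 : ζ (k0 ↑b) a x ≤ ζ k a x := hdom a x
      linarith
    have hρ1 : ρ ↑b x < ε/2 := hb ↑b x h1
    have hρ2 : ρ ↑b a < ε/2 := hb ↑b a (by linarith)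
    have htri := hρ.2.2 a ↑b x
    rw [hρ.2.1 a ↑b] at htri
    linarith

/-! ### Pair bounds and triangle inequality -/

theorem pair_bound [t : TopologicalSpace E] [RegularSpace E]
    {ρ : E → E → ℝ} (hρ : IsPseudometric ρ) (hρc : ∀ a, Continuous fun x => ρ a x)
    {x y : ℝ → E} (hx : Cadlag x) (hy : Cadlag y) :
    ∃ M, ∀ s ∈ Icc (0:ℝ) 1, ∀ u ∈ Icc (0:ℝ) 1, ρ (x s) (y u) ≤ M := by
  obtain ⟨Sx, hSx, hSxs⟩ := cadlag_compact hx
  obtain ⟨Sy, hSy, hSys⟩ := cadlag_compact hy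
  obtain ⟨M1, hM1⟩ := (hSx.image (hρc (x 0))).bddAbove
  obtain ⟨M2, hM2⟩ := (hSy.image (hρc (x 0))).bddAbove
  refine ⟨M1 + M2, fun s hs u hu => ?_⟩
  have hxs : ρ (x 0) (x s) ≤ M1 := hM1 (mem_image_of_mem _ (hSxs ⟨s, hs, rfl⟩))
  have hyu : ρ (x 0) (y u) ≤ M2 := hM2 (mem_image_of_mem _ (hSys ⟨u, hu, rfl⟩))
  have htri := hρ.2.2 (x s) (x 0) (y u)
  rw [hρ.2.1 (x s) (x 0)] at htri
  linarith

theorem skDist_triangle {ρ : E → E → ℝ} (hρ : IsPseudometric ρ) {x h y : ℝ → E}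
    (Mxh : ∃ M, ∀ s ∈ Icc (0:ℝ) 1, ∀ u ∈ Icc (0:ℝ) 1, ρ (x s) (h u) ≤ M)
    (Mhy : ∃ M, ∀ s ∈ Icc (0:ℝ) 1, ∀ u ∈ Icc (0:ℝ) 1, ρ (h s) (y u) ≤ M) :
    skDist ρ x y ≤ skDist ρ x h + skDist ρ h y := by
  refine le_of_forall_pos_le_add fun ε hε => ?_
  obtain ⟨l₁, hl₁, hA1, hA2⟩ := exists_witness (ρ := ρ) (x := x) (y := h)
    (lt_add_of_pos_right (skDist ρ x h) (half_pos hε))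
  obtain ⟨l₂, hl₂, hB1, hB2⟩ := exists_witness (ρ := ρ) (x := h) (y := y)
    (lt_add_of_pos_right (skDist ρ h y) (half_pos hε))
  obtain ⟨M₁, hM₁⟩ := Mxh
  obtain ⟨M₂, hM₂⟩ := Mhy
  have hbA : BddAbove (range fun t : Icc (0:ℝ) 1 => ρ (x (l₁ ↑t)) (h ↑t)) := by
    refine ⟨M₁, ?_⟩
    rintro r ⟨t, rfl⟩
    exact hM₁ _ (skl_maps hl₁ t.2) _ t.2
  have hbB : BddAbove (range fun t : Icc (0:ℝ) 1 => ρ (h (l₂ ↑t)) (y ↑t)) := by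
    refine ⟨M₂, ?_⟩
    rintro r ⟨t, rfl⟩
    exact hM₂ _ (skl_maps hl₂ t.2) _ t.2
  have hb1 := bdd1 hl₁
  have hb2 := bdd1 hl₂
  refine skDist_le (comp_mem hl₁ hl₂) (b := skDist ρ x h + skDist ρ h y + ε) ?_ ?_
  · intro t
    have hu : l₂ ↑t ∈ Icc (0:ℝ) 1 := skl_maps hl₂ t.2
    have e1 : |l₁ (l₂ ↑t) - l₂ ↑t| ≤ ⨆ t : Icc (0:ℝ) 1, |l₁ ↑t - (↑t:ℝ)| :=
      le_ciSup hb1 ⟨l₂ ↑t, hu⟩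
    have e2 : |l₂ ↑t - ↑t| ≤ ⨆ t : Icc (0:ℝ) 1, |l₂ ↑t - (↑t:ℝ)| := le_ciSup hb2 t
    have habs : |l₁ (l₂ ↑t) - ↑t| ≤ |l₁ (l₂ ↑t) - l₂ ↑t| + |l₂ ↑t - ↑t| := abs_sub_le _ _ _
    show |l₁ (l₂ ↑t) - ↑t| ≤ skDist ρ x h + skDist ρ h y + ε
    linarith
  · intro t
    have hu : l₂ ↑t ∈ Icc (0:ℝ) 1 := skl_maps hl₂ t.2
    have e1 : ρ (x (l₁ (l₂ ↑t))) (h (l₂ ↑t)) ≤ ⨆ t : Icc (0:ℝ) 1, ρ (x (l₁ ↑t)) (h ↑t) :=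
      le_ciSup hbA ⟨l₂ ↑t, hu⟩
    have e2 : ρ (h (l₂ ↑t)) (y ↑t) ≤ ⨆ t : Icc (0:ℝ) 1, ρ (h (l₂ ↑t)) (y ↑t) := le_ciSup hbB t
    have htri := hρ.2.2 (x (l₁ (l₂ ↑t))) (h (l₂ ↑t)) (y ↑t)
    show ρ (x (l₁ (l₂ ↑t))) (y ↑t) ≤ skDist ρ x h + skDist ρ h y + ε
    linarith

/-! ### Main comparison of Skorohod topologies -/

theorem skTop_le_skTop {I J : Type*} [tE : TopologicalSpace E] [RegularSpace E]
    [Nonempty J] {d : I → E → E → ℝ} {ζ : J → E → E → ℝ}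
    (hd : ∀ i, IsPseudometric (d i)) (hζ : ∀ j, IsPseudometric (ζ j))
    (hζdir : ∀ j j', ∃ k, ∀ a b, max (ζ j a b) (ζ j' a b) ≤ ζ k a b)
    (htd : tE = pseudoTop d) (htζ : tE = pseudoTop ζ) :
    skTop {f : ℝ → E | Cadlag f} ζ ≤ skTop {f : ℝ → E | Cadlag f} d := by
  set D := {f : ℝ → E | Cadlag f} with hD
  show skTop D ζ ≤ skTop D d
  unfold skTop
  refine le_iInf fun i => le_iInf fun x => ?_
  letI tD : TopologicalSpace ↥D := skTop D ζ
  have hcont : Continuous fun y : ↥D => skDist (d i) (x : ℝ → E) (y : ℝ → E) := by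
    rw [continuous_iff_continuousAt]
    intro y₀
    refine Metric.tendsto_nhds.mpr ?_
    intro ε hε
    have hy₀c : Cadlag (y₀ : ℝ → E) := y₀.2
    have hxc : Cadlag (x : ℝ → E) := x.2
    obtain ⟨S, hScomp, hSsub⟩ := cadlag_compact hy₀c
    obtain ⟨k, δ₀, hδ₀, hcmp⟩ := unif_comp hζ hζdir htζ (hd i)
      (fun a => continuous_of_pseudoTop htd i a) hScomp (by linarith : (0:ℝ) < ε/4)
    set δ : ℝ := min δ₀ (ε/4) with hδdef
    have hδpos : 0 < δ := lt_min hδ₀ (by linarith)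
    have hGc : Continuous fun y : ↥D => skDist (ζ k) (y₀ : ℝ → E) (y : ℝ → E) := by
      rw [continuous_iff_le_induced]
      show skTop D ζ ≤ _
      unfold skTop
      exact le_trans (iInf_le _ k) (iInf_le _ y₀)
    have hop : IsOpen ((fun y : ↥D => skDist (ζ k) (y₀ : ℝ → E) (y : ℝ → E)) ⁻¹' Iio δ) :=
      IsOpen.preimage hGc isOpen_Iio
    have h00 : skDist (ζ k) (y₀ : ℝ → E) (y₀ : ℝ → E) = 0 := skDist_self (hζ k).1 _
    have hball : (fun y : ↥D => skDist (ζ k) (y₀ : ℝ → E) (y : ℝ → E)) ⁻¹' Iio δ ∈ 𝓝 y₀ :=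
      hop.mem_nhds (by simp only [mem_preimage, mem_Iio, h00]; exact hδpos)
    filter_upwards [hball] with y hy
    simp only [mem_preimage, mem_Iio] at hy
    have hyc : Cadlag (y : ℝ → E) := y.2
    obtain ⟨l, hl, h1, h2⟩ := exists_witness hy
    have hb1 := bdd1 hl
    obtain ⟨Mζ, hMζ⟩ := pair_bound (hζ k) (fun a => continuous_of_pseudoTop htζ k a) hy₀c hyc
    have hbζ : BddAbove (range fun t : Icc (0:ℝ) 1 =>
        ζ k ((y₀ : ℝ → E) (l ↑t)) ((y : ℝ → E) ↑t)) := by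
      refine ⟨Mζ, ?_⟩
      rintro r ⟨t, rfl⟩
      exact hMζ _ (skl_maps hl t.2) _ t.2
    have hp1 : ∀ t : Icc (0:ℝ) 1, |l ↑t - (↑t:ℝ)| < δ :=
      fun t => lt_of_le_of_lt (le_ciSup hb1 t) h1
    have hpζ : ∀ t : Icc (0:ℝ) 1, ζ k ((y₀ : ℝ → E) (l ↑t)) ((y : ℝ → E) ↑t) < δ :=
      fun t => lt_of_le_of_lt (le_ciSup hbζ t) h2
    have hpd : ∀ t : Icc (0:ℝ) 1, d i ((y₀ : ℝ → E) (l ↑t)) ((y : ℝ → E) ↑t) < ε/4 := fun t =>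
      hcmp _ (hSsub ⟨l ↑t, skl_maps hl t.2, rfl⟩) _ (lt_of_lt_of_le (hpζ t) (min_le_left _ _))
    have hδε : δ ≤ ε/4 := min_le_right _ _
    have hA1 : skDist (d i) (y₀ : ℝ → E) (y : ℝ → E) ≤ ε/4 :=
      skDist_le hl (fun t => le_trans (hp1 t).le hδε) (fun t => (hpd t).le)
    obtain ⟨g, hg, hlg, hgl⟩ := exists_inv hl
    have hA2 : skDist (d i) (y : ℝ → E) (y₀ : ℝ → E) ≤ ε/4 := by
      refine skDist_le hg (fun t => ?_) (fun t => ?_)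
      · have hgt : g ↑t ∈ Icc (0:ℝ) 1 := skl_maps hg t.2
        have h5 : |l (g ↑t) - g ↑t| < δ := hp1 ⟨g ↑t, hgt⟩
        rw [hlg ↑t t.2] at h5
        rw [abs_sub_comm] at h5
        exact le_trans h5.le hδε
      · have hgt : g ↑t ∈ Icc (0:ℝ) 1 := skl_maps hg t.2
        have h6 : d i ((y₀ : ℝ → E) (l (g ↑t))) ((y : ℝ → E) (g ↑t)) < ε/4 := hpd ⟨g ↑t, hgt⟩
        rw [hlg ↑t t.2] at h6
        rw [(hd i).2.1]
        exact h6.le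
    have hdc : ∀ a, Continuous fun b => d i a b := fun a => continuous_of_pseudoTop htd i a
    have T1 : skDist (d i) (x : ℝ → E) (y : ℝ → E) ≤
        skDist (d i) (x : ℝ → E) (y₀ : ℝ → E) + skDist (d i) (y₀ : ℝ → E) (y : ℝ → E) :=
      skDist_triangle (hd i) (pair_bound (hd i) hdc hxc hy₀c) (pair_bound (hd i) hdc hy₀c hyc)
    have T2 : skDist (d i) (x : ℝ → E) (y₀ : ℝ → E) ≤
        skDist (d i) (x : ℝ → E) (y : ℝ → E) + skDist (d i) (y : ℝ → E) (y₀ : ℝ → E) :=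
      skDist_triangle (hd i) (pair_bound (hd i) hdc hxc hyc) (pair_bound (hd i) hdc hyc hy₀c)
    rw [Real.dist_eq, abs_sub_lt_iff]
    constructor
    · linarith
    · linarith
  exact continuous_iff_le_induced.mp hcont

theorem top_eq_of_subsingleton {X : Type*} (hX : ∀ a b : X, a = b)
    (t₁ t₂ : TopologicalSpace X) : t₁ = t₂ := by
  refine TopologicalSpace.ext_iff.2 fun s => ?_
  rcases s.eq_empty_or_nonempty with rfl | ⟨a, ha⟩
  · exact ⟨fun _ => @isOpen_empty _ t₂, fun _ => @isOpen_empty _ t₁⟩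
  · have hsu : s = univ := eq_univ_of_forall fun b => (hX b a) ▸ ha
    rw [hsu]
    exact ⟨fun _ => @isOpen_univ _ t₂, fun _ => @isOpen_univ _ t₁⟩

end SkAux

/-- Jakubowski's theorem: if the topology of a completely regular space `E` is generated
by two separating, directed families of pseudometrics `{d i}` and `{ζ j}`, then the
corresponding families of Skorohod pseudometrics generate the same topology on the space
`D([0,1],E)` of càdlàg functions. The Skorohod topology depends only on the topology of
`E`. -/
theorem skorohod_topology_well_defined {E : Type*} {I J : Type*}
    [tE : TopologicalSpace E] [CompletelyRegularSpace E]
    (d : I → E → E → ℝ) (ζ : J → E → E → ℝ)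
    (hd : ∀ i, IsPseudometric (d i)) (hζ : ∀ j, IsPseudometric (ζ j))
    (hdsep : ∀ a b : E, a ≠ b → ∃ i, 0 < d i a b)
    (hζsep : ∀ a b : E, a ≠ b → ∃ j, 0 < ζ j a b)
    (hddir : ∀ i i', ∃ k, ∀ a b, max (d i a b) (d i' a b) ≤ d k a b)
    (hζdir : ∀ j j', ∃ k, ∀ a b, max (ζ j a b) (ζ j' a b) ≤ ζ k a b)
    (htd : tE = pseudoTop d) (htζ : tE = pseudoTop ζ) :
    skTop {f : ℝ → E | Cadlag f} d = skTop {f : ℝ → E | Cadlag f} ζ := by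
  rcases isEmpty_or_nonempty I with hI | hI
  · have hsub : ∀ a b : E, a = b := by
      intro a b
      by_contra h
      obtain ⟨i, -⟩ := hdsep a b h
      exact hI.elim i
    exact SkAux.top_eq_of_subsingleton
      (fun f g => Subtype.ext (funext fun t => hsub _ _)) _ _
  rcases isEmpty_or_nonempty J with hJ | hJ
  · have hsub : ∀ a b : E, a = b := by
      intro a b
      by_contra h
      obtain ⟨j, -⟩ := hζsep a b h
      exact hJ.elim j
    exact SkAux.top_eq_of_subsingleton
      (fun f g => Subtype.ext (funext fun t => hsub _ _)) _ _
  exact le_antisymm (SkAux.skTop_le_skTop hζ hd hddir htζ htd)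
    (SkAux.skTop_le_skTop hd hζ hζdir htd htζ)
end
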